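/- Normal form for elementary morphisms in a tidy LD category: let f be an elementary morphism in a tidy LD category C. Then: (i) if the target of f is neither an ⊗-product nor a ⅋-product, then f is an identity; (ii) if the target of f is an ⊗-product, then f is Id^⊗-analysable, i.e., f = (g'⊗g'')∘τ^i_u(Ā) for some identity i of an ⊗-product, word u ∈ 𝔜, vector Ā, and morphisms g', g''; (iii) if the target of f is a ⅋-product, then f is Id^⅋-analysable, i.e., f = (g'⅋g'')∘κ^i_u(Ā) for some identity i of a ⅋-product, word u ∈ 𝔝, vector Ā, and morphisms g', g''. -/

import Mathlib

open CategoryTheory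

namespace LDCoherence

universe v u v₁ u₁ v₂ u₂

/-- A (unitless) linearly distributive category structure on a category `C`. -/
structure LD (C : Type u) [Category.{v} C] where
  ot : C → C → C
  pa : C → C → C
  otHom : ∀ {X₁ Y₁ X₂ Y₂ : C}, (X₁ ⟶ Y₁) → (X₂ ⟶ Y₂) → (ot X₁ X₂ ⟶ ot Y₁ Y₂)
  paHom : ∀ {X₁ Y₁ X₂ Y₂ : C}, (X₁ ⟶ Y₁) → (X₂ ⟶ Y₂) → (pa X₁ X₂ ⟶ pa Y₁ Y₂)
  otHom_id : ∀ X Y : C, otHom (𝟙 X) (𝟙 Y) = 𝟙 (ot X Y)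
  otHom_comp :
    ∀ {X₁ Y₁ Z₁ X₂ Y₂ Z₂ : C} (f₁ : X₁ ⟶ Y₁) (g₁ : Y₁ ⟶ Z₁) (f₂ : X₂ ⟶ Y₂) (g₂ : Y₂ ⟶ Z₂),
      otHom (f₁ ≫ g₁) (f₂ ≫ g₂) = otHom f₁ f₂ ≫ otHom g₁ g₂
  paHom_id : ∀ X Y : C, paHom (𝟙 X) (𝟙 Y) = 𝟙 (pa X Y)
  paHom_comp :
    ∀ {X₁ Y₁ Z₁ X₂ Y₂ Z₂ : C} (f₁ : X₁ ⟶ Y₁) (g₁ : Y₁ ⟶ Z₁) (f₂ : X₂ ⟶ Y₂) (g₂ : Y₂ ⟶ Z₂),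
      paHom (f₁ ≫ g₁) (f₂ ≫ g₂) = paHom f₁ f₂ ≫ paHom g₁ g₂
  α : ∀ A B E : C, ot A (ot B E) ⟶ ot (ot A B) E
  αInv : ∀ A B E : C, ot (ot A B) E ⟶ ot A (ot B E)
  pα : ∀ A B E : C, pa A (pa B E) ⟶ pa (pa A B) E
  pαInv : ∀ A B E : C, pa (pa A B) E ⟶ pa A (pa B E)
  δl : ∀ A B E : C, ot A (pa B E) ⟶ pa (ot A B) E
  δr : ∀ A B E : C, ot (pa A B) E ⟶ pa A (ot B E)
  α_αInv : ∀ A B E : C, α A B E ≫ αInv A B E = 𝟙 _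
  αInv_α : ∀ A B E : C, αInv A B E ≫ α A B E = 𝟙 _
  pα_pαInv : ∀ A B E : C, pα A B E ≫ pαInv A B E = 𝟙 _
  pαInv_pα : ∀ A B E : C, pαInv A B E ≫ pα A B E = 𝟙 _
  α_natural :
    ∀ {A A' B B' E E' : C} (f : A ⟶ A') (g : B ⟶ B') (h : E ⟶ E'),
      otHom f (otHom g h) ≫ α A' B' E' = α A B E ≫ otHom (otHom f g) h
  pα_natural :
    ∀ {A A' B B' E E' : C} (f : A ⟶ A') (g : B ⟶ B') (h : E ⟶ E'),
      paHom f (paHom g h) ≫ pα A' B' E' = pα A B E ≫ paHom (paHom f g) h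
  δl_natural :
    ∀ {A A' B B' E E' : C} (f : A ⟶ A') (g : B ⟶ B') (h : E ⟶ E'),
      otHom f (paHom g h) ≫ δl A' B' E' = δl A B E ≫ paHom (otHom f g) h
  δr_natural :
    ∀ {A A' B B' E E' : C} (f : A ⟶ A') (g : B ⟶ B') (h : E ⟶ E'),
      otHom (paHom f g) h ≫ δr A' B' E' = δr A B E ≫ paHom f (otHom g h)
  P1 : ∀ A B E D : C,
    α A B (ot E D) ≫ α (ot A B) E D =
      otHom (𝟙 A) (α B E D) ≫ α A (ot B E) D ≫ otHom (α A B E) (𝟙 D)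
  P2 : ∀ A B E D : C,
    α A B (pa E D) ≫ δl (ot A B) E D =
      otHom (𝟙 A) (δl B E D) ≫ δl A (ot B E) D ≫ paHom (α A B E) (𝟙 D)
  P3 : ∀ A B E D : C,
    otHom (𝟙 A) (δr B E D) ≫ δl A B (ot E D) =
      α A (pa B E) D ≫ otHom (δl A B E) (𝟙 D) ≫ δr (ot A B) E D
  P4 : ∀ A B E D : C,
    δl A B (pa E D) ≫ pα (ot A B) E D =
      otHom (𝟙 A) (pα B E D) ≫ δl A (pa B E) D ≫ paHom (δl A B E) (𝟙 D)
  P5 : ∀ A B E D : C,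
    δr A B (ot E D) ≫ paHom (𝟙 A) (α B E D) =
      α (pa A B) E D ≫ otHom (δr A B E) (𝟙 D) ≫ δr A (ot B E) D
  P6 : ∀ A B E D : C,
    δl (pa A B) E D ≫ paHom (δr A B E) (𝟙 D) =
      δr A B (pa E D) ≫ paHom (𝟙 A) (δl B E D) ≫ pα A (ot B E) D
  P7 : ∀ A B E D : C,
    otHom (pα A B E) (𝟙 D) ≫ δr (pa A B) E D =
      δr A (pa B E) D ≫ paHom (𝟙 A) (δr B E D) ≫ pα A B (ot E D)
  P8 : ∀ A B E D : C,
    pα A B (pa E D) ≫ pα (pa A B) E D =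
      paHom (𝟙 A) (pα B E D) ≫ pα A (pa B E) D ≫ paHom (pα A B E) (𝟙 D)

variable {C : Type u} [Category.{v} C]

/-- Tidiness of a linearly distributive category. -/
def LD.Tidy (L : LD C) : Prop :=
  (∀ A₁ A₂ B₁ B₂ : C, L.ot A₁ A₂ = L.ot B₁ B₂ → A₁ = B₁ ∧ A₂ = B₂) ∧
  (∀ A₁ A₂ B₁ B₂ : C, L.pa A₁ A₂ = L.pa B₁ B₂ → A₁ = B₁ ∧ A₂ = B₂) ∧
  (∀ A₁ A₂ B₁ B₂ : C, L.ot A₁ A₂ ≠ L.pa B₁ B₂)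

/-- Generators of the free monoid 𝔜. -/
inductive YGen : Type
  | a : YGen
  | ainv : YGen

/-- Generators of the free monoid 𝔝. -/
inductive ZGen : Type
  | pa : ZGen
  | painv : ZGen
  | dl : ZGen
  | dr : ZGen

/-- A word in the free monoid 𝔜 together with a matching vector of objects:
each letter carries the object of the vector that it consumes in the recursions
defining `H`, `L`, `R` and `τ`.  The outermost constructor is the terminal letter. -/
inductive YW (C : Type u) : Type u
  | nil : YW C
  | a : C → YW C → YW C
  | ainv : C → YW C → YW C

/-- The underlying word in 𝔜 of a word-with-vector. -/
def YW.word {C : Type u} : YW C → List YGen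
  | .nil => []
  | .a _ w => YGen.a :: w.word
  | .ainv _ w => YGen.ainv :: w.word

/-- A word in the free monoid 𝔝 together with a matching vector of objects. -/
inductive ZW (C : Type u) : Type u
  | nil : ZW C
  | pa : C → ZW C → ZW C
  | painv : C → ZW C → ZW C
  | dl : C → ZW C → ZW C
  | dr : C → ZW C → ZW C

/-- The underlying word in 𝔝 of a word-with-vector. -/
def ZW.word {C : Type u} : ZW C → List ZGen
  | .nil => []
  | .pa _ w => ZGen.pa :: w.word
  | .painv _ w => ZGen.painv :: w.word
  | .dl _ w => ZGen.dl :: w.word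
  | .dr _ w => ZGen.dr :: w.word

/-- The functor `H^f_u` (object part), for `f` with source `X` and target an ⊗-product. -/
def Hot (L : LD C) (X : C) : YW C → C
  | .nil => X
  | .a A w => L.ot A (Hot L X w)
  | .ainv A w => L.ot (Hot L X w) A

/-- The functor `L^f_u` (object part), for `f` with target `L.ot Y Z`. -/
def Lot (L : LD C) (Y : C) : YW C → C
  | .nil => Y
  | .a A w => L.ot A (Lot L Y w)
  | .ainv _ w => Lot L Y w

/-- The functor `R^f_u` (object part), for `f` with target `L.ot Y Z`. -/
def Rot (L : LD C) (Z : C) : YW C → C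
  | .nil => Z
  | .a _ w => Rot L Z w
  | .ainv A w => L.ot (Rot L Z w) A

/-- The natural transformation `τ^f_u` (componentwise). -/
def tau (L : LD C) {X Y Z : C} (f : X ⟶ L.ot Y Z) :
    (w : YW C) → (Hot L X w ⟶ L.ot (Lot L Y w) (Rot L Z w))
  | .nil => f
  | .a A w => L.otHom (𝟙 A) (tau L f w) ≫ L.α A (Lot L Y w) (Rot L Z w)
  | .ainv A w => L.otHom (tau L f w) (𝟙 A) ≫ L.αInv (Lot L Y w) (Rot L Z w) A

/-- The functor `H^f_u` (object part), for `f` with source `X` and target a ⅋-product. -/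
def Hpa (L : LD C) (X : C) : ZW C → C
  | .nil => X
  | .pa A w => L.pa A (Hpa L X w)
  | .painv A w => L.pa (Hpa L X w) A
  | .dl A w => L.ot A (Hpa L X w)
  | .dr A w => L.ot (Hpa L X w) A

/-- The functor `L^f_u` (object part), for `f` with target `L.pa Y Z`. -/
def Lpa (L : LD C) (Y : C) : ZW C → C
  | .nil => Y
  | .pa A w => L.pa A (Lpa L Y w)
  | .painv _ w => Lpa L Y w
  | .dl A w => L.ot A (Lpa L Y w)
  | .dr _ w => Lpa L Y w

/-- The functor `R^f_u` (object part), for `f` with target `L.pa Y Z`. -/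
def Rpa (L : LD C) (Z : C) : ZW C → C
  | .nil => Z
  | .pa _ w => Rpa L Z w
  | .painv A w => L.pa (Rpa L Z w) A
  | .dl _ w => Rpa L Z w
  | .dr A w => L.ot (Rpa L Z w) A

/-- The natural transformation `κ^f_u` (componentwise). -/
def kappa (L : LD C) {X Y Z : C} (f : X ⟶ L.pa Y Z) :
    (w : ZW C) → (Hpa L X w ⟶ L.pa (Lpa L Y w) (Rpa L Z w))
  | .nil => f
  | .pa A w => L.paHom (𝟙 A) (kappa L f w) ≫ L.pα A (Lpa L Y w) (Rpa L Z w)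
  | .painv A w => L.paHom (kappa L f w) (𝟙 A) ≫ L.pαInv (Lpa L Y w) (Rpa L Z w) A
  | .dl A w => L.otHom (𝟙 A) (kappa L f w) ≫ L.δl A (Lpa L Y w) (Rpa L Z w)
  | .dr A w => L.otHom (kappa L f w) (𝟙 A) ≫ L.δr (Lpa L Y w) (Rpa L Z w) A

/-- `h` is a component of the associator `α`. -/
def IsAlphaComp (L : LD C) {W T : C} (h : W ⟶ T) : Prop :=
  ∃ (A B E : C) (h₁ : W = L.ot A (L.ot B E)) (h₂ : L.ot (L.ot A B) E = T),
    h = eqToHom h₁ ≫ L.α A B E ≫ eqToHom h₂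

/-- `h` is a component of the inverse associator `α⁻¹`. -/
def IsAlphaInvComp (L : LD C) {W T : C} (h : W ⟶ T) : Prop :=
  ∃ (A B E : C) (h₁ : W = L.ot (L.ot A B) E) (h₂ : L.ot A (L.ot B E) = T),
    h = eqToHom h₁ ≫ L.αInv A B E ≫ eqToHom h₂

/-- `h` is a component of the associator `ᾱ`. -/
def IsPalphaComp (L : LD C) {W T : C} (h : W ⟶ T) : Prop :=
  ∃ (A B E : C) (h₁ : W = L.pa A (L.pa B E)) (h₂ : L.pa (L.pa A B) E = T),
    h = eqToHom h₁ ≫ L.pα A B E ≫ eqToHom h₂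

/-- `h` is a component of the inverse associator `ᾱ⁻¹`. -/
def IsPalphaInvComp (L : LD C) {W T : C} (h : W ⟶ T) : Prop :=
  ∃ (A B E : C) (h₁ : W = L.pa (L.pa A B) E) (h₂ : L.pa A (L.pa B E) = T),
    h = eqToHom h₁ ≫ L.pαInv A B E ≫ eqToHom h₂

/-- `h` is a component of the left distributor `δˡ`. -/
def IsDlComp (L : LD C) {W T : C} (h : W ⟶ T) : Prop :=
  ∃ (A B E : C) (h₁ : W = L.ot A (L.pa B E)) (h₂ : L.pa (L.ot A B) E = T),
    h = eqToHom h₁ ≫ L.δl A B E ≫ eqToHom h₂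

/-- `h` is a component of the right distributor `δʳ`. -/
def IsDrComp (L : LD C) {W T : C} (h : W ⟶ T) : Prop :=
  ∃ (A B E : C) (h₁ : W = L.ot (L.pa A B) E) (h₂ : L.pa A (L.ot B E) = T),
    h = eqToHom h₁ ≫ L.δr A B E ≫ eqToHom h₂

/-- `h` is of the form `id_A ⅋ h'` for some morphism `h'`. -/
def IsIdPaLeft (L : LD C) {W T : C} (h : W ⟶ T) : Prop :=
  ∃ (A W' T' : C) (h' : W' ⟶ T') (h₁ : W = L.pa A W') (h₂ : L.pa A T' = T),
    h = eqToHom h₁ ≫ L.paHom (𝟙 A) h' ≫ eqToHom h₂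

/-- `h` is of the form `h' ⅋ id_A` for some morphism `h'`. -/
def IsIdPaRight (L : LD C) {W T : C} (h : W ⟶ T) : Prop :=
  ∃ (A W' T' : C) (h' : W' ⟶ T') (h₁ : W = L.pa W' A) (h₂ : L.pa T' A = T),
    h = eqToHom h₁ ≫ L.paHom h' (𝟙 A) ≫ eqToHom h₂

/-- The set `Id^⊗` of identities of ⊗-products, as a set of morphisms into ⊗-products. -/
def IdOtSet (L : LD C) ⦃X Y Z : C⦄ (f : X ⟶ L.ot Y Z) : Prop :=
  ∃ hE : X = L.ot Y Z, f = eqToHom hE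

/-- The set `Id^⅋` of identities of ⅋-products, as a set of morphisms into ⅋-products. -/
def IdPaSet (L : LD C) ⦃X Y Z : C⦄ (f : X ⟶ L.pa Y Z) : Prop :=
  ∃ hE : X = L.pa Y Z, f = eqToHom hE

/-- `𝔣`-analysability for a set `𝔣` of morphisms whose targets are ⊗-products:
`g = (g' ⊗ g'') ∘ τ^f_u(Ā)` for some `f ∈ 𝔣`, word `u`, vector `Ā` and morphisms `g', g''`. -/
def OtAnalysable (L : LD C) (𝔣 : ∀ ⦃X Y Z : C⦄, (X ⟶ L.ot Y Z) → Prop)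
    {P T : C} (g : P ⟶ T) : Prop :=
  ∃ (X Y Z : C) (f : X ⟶ L.ot Y Z), 𝔣 f ∧
    ∃ (w : YW C) (Q₁ Q₂ : C) (g' : Lot L Y w ⟶ Q₁) (g'' : Rot L Z w ⟶ Q₂)
      (hP : P = Hot L X w) (hT : L.ot Q₁ Q₂ = T),
      g = eqToHom hP ≫ tau L f w ≫ L.otHom g' g'' ≫ eqToHom hT

/-- `𝔣`-analysability for a set `𝔣` of morphisms whose targets are ⅋-products:
`g = (g' ⅋ g'') ∘ κ^f_u(Ā)` for some `f ∈ 𝔣`, word `u`, vector `Ā` and morphisms `g', g''`. -/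
def PaAnalysable (L : LD C) (𝔣 : ∀ ⦃X Y Z : C⦄, (X ⟶ L.pa Y Z) → Prop)
    {P T : C} (g : P ⟶ T) : Prop :=
  ∃ (X Y Z : C) (f : X ⟶ L.pa Y Z), 𝔣 f ∧
    ∃ (w : ZW C) (Q₁ Q₂ : C) (g' : Lpa L Y w ⟶ Q₁) (g'' : Rpa L Z w ⟶ Q₂)
      (hP : P = Hpa L X w) (hT : L.pa Q₁ Q₂ = T),
      g = eqToHom hP ≫ kappa L f w ≫ L.paHom g' g'' ≫ eqToHom hT

/-- Atomic morphisms of a (tidy) LD category. -/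
inductive Atomic (L : LD C) : ∀ {W T : C}, (W ⟶ T) → Prop
  | alpha (A B E : C) : Atomic L (L.α A B E)
  | alphaInv (A B E : C) : Atomic L (L.αInv A B E)
  | palpha (A B E : C) : Atomic L (L.pα A B E)
  | palphaInv (A B E : C) : Atomic L (L.pαInv A B E)
  | dl (A B E : C) : Atomic L (L.δl A B E)
  | dr (A B E : C) : Atomic L (L.δr A B E)
  | otRightId {W T : C} (f : W ⟶ T) (A : C) : Atomic L f → Atomic L (L.otHom f (𝟙 A))
  | otLeftId {W T : C} (f : W ⟶ T) (A : C) : Atomic L f → Atomic L (L.otHom (𝟙 A) f)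
  | paRightId {W T : C} (f : W ⟶ T) (A : C) : Atomic L f → Atomic L (L.paHom f (𝟙 A))
  | paLeftId {W T : C} (f : W ⟶ T) (A : C) : Atomic L f → Atomic L (L.paHom (𝟙 A) f)

/-- Elementary morphisms: identities and finite composites of atomic morphisms. -/
inductive Elementary (L : LD C) : ∀ {W T : C}, (W ⟶ T) → Prop
  | id (X : C) : Elementary L (𝟙 X)
  | of {W T : C} {f : W ⟶ T} : Atomic L f → Elementary L f
  | comp {W T U : C} {f : W ⟶ T} {g : T ⟶ U} :
      Elementary L f → Elementary L g → Elementary L (f ≫ g)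

/-- A strict Frobenius linearly distributive functor between LD categories. -/
structure StrictLDFunctor (Cc : Type u₁) [Category.{v₁} Cc] (Dd : Type u₂) [Category.{v₂} Dd]
    (LC : LD Cc) (LDd : LD Dd) where
  toFunctor : Cc ⥤ Dd
  obj_ot : ∀ X Y : Cc, toFunctor.obj (LC.ot X Y) = LDd.ot (toFunctor.obj X) (toFunctor.obj Y)
  obj_pa : ∀ X Y : Cc, toFunctor.obj (LC.pa X Y) = LDd.pa (toFunctor.obj X) (toFunctor.obj Y)
  map_ot : ∀ {X₁ Y₁ X₂ Y₂ : Cc} (f : X₁ ⟶ Y₁) (g : X₂ ⟶ Y₂),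
    toFunctor.map (LC.otHom f g) =
      eqToHom (obj_ot X₁ X₂) ≫ LDd.otHom (toFunctor.map f) (toFunctor.map g) ≫
        eqToHom (obj_ot Y₁ Y₂).symm
  map_pa : ∀ {X₁ Y₁ X₂ Y₂ : Cc} (f : X₁ ⟶ Y₁) (g : X₂ ⟶ Y₂),
    toFunctor.map (LC.paHom f g) =
      eqToHom (obj_pa X₁ X₂) ≫ LDd.paHom (toFunctor.map f) (toFunctor.map g) ≫
        eqToHom (obj_pa Y₁ Y₂).symm
  map_α : ∀ A B E : Cc,
    toFunctor.map (LC.α A B E) =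
      eqToHom (by simp only [obj_ot]) ≫
        LDd.α (toFunctor.obj A) (toFunctor.obj B) (toFunctor.obj E) ≫
        eqToHom (by simp only [obj_ot])
  map_αInv : ∀ A B E : Cc,
    toFunctor.map (LC.αInv A B E) =
      eqToHom (by simp only [obj_ot]) ≫
        LDd.αInv (toFunctor.obj A) (toFunctor.obj B) (toFunctor.obj E) ≫
        eqToHom (by simp only [obj_ot])
  map_pα : ∀ A B E : Cc,
    toFunctor.map (LC.pα A B E) =
      eqToHom (by simp only [obj_pa]) ≫
        LDd.pα (toFunctor.obj A) (toFunctor.obj B) (toFunctor.obj E) ≫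
        eqToHom (by simp only [obj_pa])
  map_pαInv : ∀ A B E : Cc,
    toFunctor.map (LC.pαInv A B E) =
      eqToHom (by simp only [obj_pa]) ≫
        LDd.pαInv (toFunctor.obj A) (toFunctor.obj B) (toFunctor.obj E) ≫
        eqToHom (by simp only [obj_pa])
  map_δl : ∀ A B E : Cc,
    toFunctor.map (LC.δl A B E) =
      eqToHom (by simp only [obj_ot, obj_pa]) ≫
        LDd.δl (toFunctor.obj A) (toFunctor.obj B) (toFunctor.obj E) ≫
        eqToHom (by simp only [obj_ot, obj_pa])
  map_δr : ∀ A B E : Cc,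
    toFunctor.map (LC.δr A B E) =
      eqToHom (by simp only [obj_ot, obj_pa]) ≫
        LDd.δr (toFunctor.obj A) (toFunctor.obj B) (toFunctor.obj E) ≫
        eqToHom (by simp only [obj_ot, obj_pa])

/-- A (unitless) Frobenius linearly distributive functor between LD categories. -/
structure FrobLDFunctor (Cc : Type u₁) [Category.{v₁} Cc] (Dd : Type u₂) [Category.{v₂} Dd]
    (LC : LD Cc) (LDd : LD Dd) where
  toFunctor : Cc ⥤ Dd
  μ : ∀ X Y : Cc, LDd.ot (toFunctor.obj X) (toFunctor.obj Y) ⟶ toFunctor.obj (LC.ot X Y)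
  Δ : ∀ X Y : Cc, toFunctor.obj (LC.pa X Y) ⟶ LDd.pa (toFunctor.obj X) (toFunctor.obj Y)
  μ_natural : ∀ {X₁ Y₁ X₂ Y₂ : Cc} (f : X₁ ⟶ Y₁) (g : X₂ ⟶ Y₂),
    LDd.otHom (toFunctor.map f) (toFunctor.map g) ≫ μ Y₁ Y₂ =
      μ X₁ X₂ ≫ toFunctor.map (LC.otHom f g)
  Δ_natural : ∀ {X₁ Y₁ X₂ Y₂ : Cc} (f : X₁ ⟶ Y₁) (g : X₂ ⟶ Y₂),
    toFunctor.map (LC.paHom f g) ≫ Δ Y₁ Y₂ =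
      Δ X₁ X₂ ≫ LDd.paHom (toFunctor.map f) (toFunctor.map g)
  H1 : ∀ A B E : Cc,
    LDd.α (toFunctor.obj A) (toFunctor.obj B) (toFunctor.obj E) ≫
        LDd.otHom (μ A B) (𝟙 (toFunctor.obj E)) ≫ μ (LC.ot A B) E =
      LDd.otHom (𝟙 (toFunctor.obj A)) (μ B E) ≫ μ A (LC.ot B E) ≫ toFunctor.map (LC.α A B E)
  H2 : ∀ A B E : Cc,
    LDd.otHom (𝟙 (toFunctor.obj A)) (Δ B E) ≫
        LDd.δl (toFunctor.obj A) (toFunctor.obj B) (toFunctor.obj E) ≫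
        LDd.paHom (μ A B) (𝟙 (toFunctor.obj E)) =
      μ A (LC.pa B E) ≫ toFunctor.map (LC.δl A B E) ≫ Δ (LC.ot A B) E
  H3 : ∀ A B E : Cc,
    LDd.otHom (Δ A B) (𝟙 (toFunctor.obj E)) ≫
        LDd.δr (toFunctor.obj A) (toFunctor.obj B) (toFunctor.obj E) ≫
        LDd.paHom (𝟙 (toFunctor.obj A)) (μ B E) =
      μ (LC.pa A B) E ≫ toFunctor.map (LC.δr A B E) ≫ Δ A (LC.ot B E)
  H4 : ∀ A B E : Cc,
    Δ A (LC.pa B E) ≫ LDd.paHom (𝟙 (toFunctor.obj A)) (Δ B E) ≫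
        LDd.pα (toFunctor.obj A) (toFunctor.obj B) (toFunctor.obj E) =
      toFunctor.map (LC.pα A B E) ≫ Δ (LC.pa A B) E ≫
        LDd.paHom (Δ A B) (𝟙 (toFunctor.obj E))

variable {Cc : Type u₁} [Category.{v₁} Cc] {Dd : Type u₂} [Category.{v₂} Dd]
  {LC : LD Cc} {LDd : LD Dd}

/-- Tidiness of a Frobenius LD functor: the image of an object is never a tensor product. -/
def FrobLDFunctor.TidyF (F : FrobLDFunctor Cc Dd LC LDd) : Prop :=
  ∀ (A : Cc) (P Q : Dd),
    F.toFunctor.obj A ≠ LDd.ot P Q ∧ F.toFunctor.obj A ≠ LDd.pa P Q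

/-- Multiplicative morphisms of the target category of a Frobenius LD functor. -/
inductive Multiplicative (F : FrobLDFunctor Cc Dd LC LDd) : ∀ {W T : Dd}, (W ⟶ T) → Prop
  | id (X : Cc) : Multiplicative F (𝟙 (F.toFunctor.obj X))
  | mu {W₁ W₂ : Dd} {X Y : Cc} (f : W₁ ⟶ F.toFunctor.obj X) (g : W₂ ⟶ F.toFunctor.obj Y) :
      Multiplicative F f → Multiplicative F g →
      Multiplicative F (LDd.otHom f g ≫ F.μ X Y)

/-- `F`-atomic morphisms of the target category of a Frobenius LD functor. -/
inductive FAtomic (F : FrobLDFunctor Cc Dd LC LDd) : ∀ {W T : Dd}, (W ⟶ T) → Prop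
  | alpha (A B E : Dd) : FAtomic F (LDd.α A B E)
  | alphaInv (A B E : Dd) : FAtomic F (LDd.αInv A B E)
  | palpha (A B E : Dd) : FAtomic F (LDd.pα A B E)
  | palphaInv (A B E : Dd) : FAtomic F (LDd.pαInv A B E)
  | dl (A B E : Dd) : FAtomic F (LDd.δl A B E)
  | dr (A B E : Dd) : FAtomic F (LDd.δr A B E)
  | mu (X Y : Cc) : FAtomic F (F.μ X Y)
  | delta (X Y : Cc) : FAtomic F (F.Δ X Y)
  | map {X Y : Cc} (f : X ⟶ Y) : Elementary LC f → FAtomic F (F.toFunctor.map f)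
  | otRightId {W T : Dd} (f : W ⟶ T) (A : Dd) : FAtomic F f → FAtomic F (LDd.otHom f (𝟙 A))
  | otLeftId {W T : Dd} (f : W ⟶ T) (A : Dd) : FAtomic F f → FAtomic F (LDd.otHom (𝟙 A) f)
  | paRightId {W T : Dd} (f : W ⟶ T) (A : Dd) : FAtomic F f → FAtomic F (LDd.paHom f (𝟙 A))
  | paLeftId {W T : Dd} (f : W ⟶ T) (A : Dd) : FAtomic F f → FAtomic F (LDd.paHom (𝟙 A) f)

/-- `F`-elementary morphisms: identities and finite composites of `F`-atomic morphisms. -/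
inductive FElementary (F : FrobLDFunctor Cc Dd LC LDd) : ∀ {W T : Dd}, (W ⟶ T) → Prop
  | id (X : Dd) : FElementary F (𝟙 X)
  | of {W T : Dd} {f : W ⟶ T} : FAtomic F f → FElementary F f
  | comp {W T U : Dd} {f : W ⟶ T} {g : T ⟶ U} :
      FElementary F f → FElementary F g → FElementary F (f ≫ g)

/-- The set `𝔡` of morphisms of the form `Δ ∘ F(κ^i_u(X̄))`, where `i` is the identity of a
⅋-product of the source category. -/
def frakD (F : FrobLDFunctor Cc Dd LC LDd) ⦃P Q₁ Q₂ : Dd⦄ (g : P ⟶ LDd.pa Q₁ Q₂) : Prop :=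
  ∃ (Y Z : Cc) (w : ZW Cc) (hP : P = F.toFunctor.obj (Hpa LC (LC.pa Y Z) w))
    (h₁ : F.toFunctor.obj (Lpa LC Y w) = Q₁) (h₂ : F.toFunctor.obj (Rpa LC Z w) = Q₂),
    g = eqToHom hP ≫ F.toFunctor.map (kappa LC (𝟙 (LC.pa Y Z)) w) ≫
        F.Δ (Lpa LC Y w) (Rpa LC Z w) ≫ eqToHom (by rw [h₁, h₂])


section Infrastructure

variable {L : LD C}

attribute [local simp] Category.assoc

lemma LD.otHom_id_comp (L : LD C) {A X Y Z : C} (f : X ⟶ Y) (g : Y ⟶ Z) :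
    L.otHom (𝟙 A) (f ≫ g) = L.otHom (𝟙 A) f ≫ L.otHom (𝟙 A) g := by
  rw [← L.otHom_comp]; simp

lemma LD.otHom_comp_id (L : LD C) {A X Y Z : C} (f : X ⟶ Y) (g : Y ⟶ Z) :
    L.otHom (f ≫ g) (𝟙 A) = L.otHom f (𝟙 A) ≫ L.otHom g (𝟙 A) := by
  rw [← L.otHom_comp]; simp

lemma LD.paHom_id_comp (L : LD C) {A X Y Z : C} (f : X ⟶ Y) (g : Y ⟶ Z) :
    L.paHom (𝟙 A) (f ≫ g) = L.paHom (𝟙 A) f ≫ L.paHom (𝟙 A) g := by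
  rw [← L.paHom_comp]; simp

lemma LD.paHom_comp_id (L : LD C) {A X Y Z : C} (f : X ⟶ Y) (g : Y ⟶ Z) :
    L.paHom (f ≫ g) (𝟙 A) = L.paHom f (𝟙 A) ≫ L.paHom g (𝟙 A) := by
  rw [← L.paHom_comp]; simp

lemma LD.otHom_exch (L : LD C) {X Y X' Y' : C} (f : X ⟶ Y) (g : X' ⟶ Y') :
    L.otHom f (𝟙 X') ≫ L.otHom (𝟙 Y) g = L.otHom (𝟙 X) g ≫ L.otHom f (𝟙 Y') := by
  rw [← L.otHom_comp, ← L.otHom_comp]; simp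

lemma LD.paHom_exch (L : LD C) {X Y X' Y' : C} (f : X ⟶ Y) (g : X' ⟶ Y') :
    L.paHom f (𝟙 X') ≫ L.paHom (𝟙 Y) g = L.paHom (𝟙 X) g ≫ L.paHom f (𝟙 Y') := by
  rw [← L.paHom_comp, ← L.paHom_comp]; simp

lemma LD.otHom_id_eqToHom (L : LD C) {A X Y : C} (e : X = Y) :
    L.otHom (𝟙 A) (eqToHom e) = eqToHom (by rw [e]) := by
  subst e; simp [L.otHom_id]

lemma LD.otHom_eqToHom_id (L : LD C) {A X Y : C} (e : X = Y) :
    L.otHom (eqToHom e) (𝟙 A) = eqToHom (by rw [e]) := by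
  subst e; simp [L.otHom_id]

lemma LD.paHom_id_eqToHom (L : LD C) {A X Y : C} (e : X = Y) :
    L.paHom (𝟙 A) (eqToHom e) = eqToHom (by rw [e]) := by
  subst e; simp [L.paHom_id]

lemma LD.paHom_eqToHom_id (L : LD C) {A X Y : C} (e : X = Y) :
    L.paHom (eqToHom e) (𝟙 A) = eqToHom (by rw [e]) := by
  subst e; simp [L.paHom_id]

lemma LD.α_αInv_assoc (L : LD C) {A B E X : C} (f : L.ot A (L.ot B E) ⟶ X) :
    L.α A B E ≫ L.αInv A B E ≫ f = f := by
  rw [← Category.assoc, L.α_αInv, Category.id_comp]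

lemma LD.αInv_α_assoc (L : LD C) {A B E X : C} (f : L.ot (L.ot A B) E ⟶ X) :
    L.αInv A B E ≫ L.α A B E ≫ f = f := by
  rw [← Category.assoc, L.αInv_α, Category.id_comp]

lemma LD.pα_pαInv_assoc (L : LD C) {A B E X : C} (f : L.pa A (L.pa B E) ⟶ X) :
    L.pα A B E ≫ L.pαInv A B E ≫ f = f := by
  rw [← Category.assoc, L.pα_pαInv, Category.id_comp]

lemma LD.pαInv_pα_assoc (L : LD C) {A B E X : C} (f : L.pa (L.pa A B) E ⟶ X) :
    L.pαInv A B E ≫ L.pα A B E ≫ f = f := by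
  rw [← Category.assoc, L.pαInv_pα, Category.id_comp]

/-- Exhaustive description of atomic morphisms via the `Is...Comp` predicates. -/
lemma atomic_cases {W T : C} {h : W ⟶ T} (hh : Atomic L h) :
    IsAlphaComp L h ∨ IsAlphaInvComp L h ∨ IsPalphaComp L h ∨ IsPalphaInvComp L h ∨
    IsDlComp L h ∨ IsDrComp L h ∨
    (∃ (A W' T' : C) (h' : W' ⟶ T') (h₁ : W = L.ot A W') (h₂ : L.ot A T' = T),
      Atomic L h' ∧ h = eqToHom h₁ ≫ L.otHom (𝟙 A) h' ≫ eqToHom h₂) ∨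
    (∃ (A W' T' : C) (h' : W' ⟶ T') (h₁ : W = L.ot W' A) (h₂ : L.ot T' A = T),
      Atomic L h' ∧ h = eqToHom h₁ ≫ L.otHom h' (𝟙 A) ≫ eqToHom h₂) ∨
    (∃ (A W' T' : C) (h' : W' ⟶ T') (h₁ : W = L.pa A W') (h₂ : L.pa A T' = T),
      Atomic L h' ∧ h = eqToHom h₁ ≫ L.paHom (𝟙 A) h' ≫ eqToHom h₂) ∨
    (∃ (A W' T' : C) (h' : W' ⟶ T') (h₁ : W = L.pa W' A) (h₂ : L.pa T' A = T),
      Atomic L h' ∧ h = eqToHom h₁ ≫ L.paHom h' (𝟙 A) ≫ eqToHom h₂) := by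
  cases hh with
  | alpha A B E => exact Or.inl ⟨A, B, E, rfl, rfl, by simp⟩
  | alphaInv A B E => exact Or.inr <| Or.inl ⟨A, B, E, rfl, rfl, by simp⟩
  | palpha A B E => exact Or.inr <| Or.inr <| Or.inl ⟨A, B, E, rfl, rfl, by simp⟩
  | palphaInv A B E => exact Or.inr <| Or.inr <| Or.inr <| Or.inl ⟨A, B, E, rfl, rfl, by simp⟩
  | dl A B E => exact Or.inr <| Or.inr <| Or.inr <| Or.inr <| Or.inl ⟨A, B, E, rfl, rfl, by simp⟩
  | dr A B E =>
    exact Or.inr <| Or.inr <| Or.inr <| Or.inr <| Or.inr <| Or.inl ⟨A, B, E, rfl, rfl, by simp⟩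
  | otLeftId f A hf =>
    exact Or.inr <| Or.inr <| Or.inr <| Or.inr <| Or.inr <| Or.inr <| Or.inl
      ⟨A, _, _, f, rfl, rfl, hf, by simp⟩
  | otRightId f A hf =>
    exact Or.inr <| Or.inr <| Or.inr <| Or.inr <| Or.inr <| Or.inr <| Or.inr <| Or.inl
      ⟨A, _, _, f, rfl, rfl, hf, by simp⟩
  | paLeftId f A hf =>
    exact Or.inr <| Or.inr <| Or.inr <| Or.inr <| Or.inr <| Or.inr <| Or.inr <| Or.inr <| Or.inl
      ⟨A, _, _, f, rfl, rfl, hf, by simp⟩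
  | paRightId f A hf =>
    exact Or.inr <| Or.inr <| Or.inr <| Or.inr <| Or.inr <| Or.inr <| Or.inr <| Or.inr <| Or.inr
      ⟨A, _, _, f, rfl, rfl, hf, by simp⟩

/-- Constructor for `OtAnalysable` with trivial `eqToHom`s. -/
lemma otAnalysable_mk (L : LD C) (Y Z : C) (w : YW C) {Q₁ Q₂ : C}
    (g' : Lot L Y w ⟶ Q₁) (g'' : Rot L Z w ⟶ Q₂) {f : Hot L (L.ot Y Z) w ⟶ L.ot Q₁ Q₂}
    (hf : f = tau L (𝟙 (L.ot Y Z)) w ≫ L.otHom g' g'') :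
    OtAnalysable L (IdOtSet L) f :=
  ⟨L.ot Y Z, Y, Z, 𝟙 _, ⟨rfl, (eqToHom_refl _ rfl).symm⟩, w, Q₁, Q₂, g', g'', rfl, rfl, by
    simp [hf]⟩

/-- Constructor for `OtAnalysable`, general form. -/
lemma otAnalysable_mk' (L : LD C) (Y Z : C) (w : YW C) {Q₁ Q₂ : C}
    (g' : Lot L Y w ⟶ Q₁) (g'' : Rot L Z w ⟶ Q₂) {P T : C}
    (hP : P = Hot L (L.ot Y Z) w) (hT : L.ot Q₁ Q₂ = T) {f : P ⟶ T}
    (hf : f = eqToHom hP ≫ tau L (𝟙 (L.ot Y Z)) w ≫ L.otHom g' g'' ≫ eqToHom hT) :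
    OtAnalysable L (IdOtSet L) f :=
  ⟨L.ot Y Z, Y, Z, 𝟙 _, ⟨rfl, (eqToHom_refl _ rfl).symm⟩, w, Q₁, Q₂, g', g'', hP, hT, hf⟩

/-- Constructor for `PaAnalysable` with trivial `eqToHom`s. -/
lemma paAnalysable_mk (L : LD C) (Y Z : C) (w : ZW C) {Q₁ Q₂ : C}
    (g' : Lpa L Y w ⟶ Q₁) (g'' : Rpa L Z w ⟶ Q₂) {f : Hpa L (L.pa Y Z) w ⟶ L.pa Q₁ Q₂}
    (hf : f = kappa L (𝟙 (L.pa Y Z)) w ≫ L.paHom g' g'') :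
    PaAnalysable L (IdPaSet L) f :=
  ⟨L.pa Y Z, Y, Z, 𝟙 _, ⟨rfl, (eqToHom_refl _ rfl).symm⟩, w, Q₁, Q₂, g', g'', rfl, rfl, by
    simp [hf]⟩

/-- Constructor for `PaAnalysable`, general form. -/
lemma paAnalysable_mk' (L : LD C) (Y Z : C) (w : ZW C) {Q₁ Q₂ : C}
    (g' : Lpa L Y w ⟶ Q₁) (g'' : Rpa L Z w ⟶ Q₂) {P T : C}
    (hP : P = Hpa L (L.pa Y Z) w) (hT : L.pa Q₁ Q₂ = T) {f : P ⟶ T}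
    (hf : f = eqToHom hP ≫ kappa L (𝟙 (L.pa Y Z)) w ≫ L.paHom g' g'' ≫ eqToHom hT) :
    PaAnalysable L (IdPaSet L) f :=
  ⟨L.pa Y Z, Y, Z, 𝟙 _, ⟨rfl, (eqToHom_refl _ rfl).symm⟩, w, Q₁, Q₂, g', g'', hP, hT, hf⟩

lemma LD.cancelOtR (L : LD C) {X Y A : C} {u : X ⟶ Y} {v : Y ⟶ X} (h : u ≫ v = 𝟙 X) :
    L.otHom u (𝟙 A) ≫ L.otHom v (𝟙 A) = 𝟙 _ := by
  rw [← L.otHom_comp, h]; simp [L.otHom_id]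

lemma LD.cancelOtL (L : LD C) {X Y A : C} {u : X ⟶ Y} {v : Y ⟶ X} (h : u ≫ v = 𝟙 X) :
    L.otHom (𝟙 A) u ≫ L.otHom (𝟙 A) v = 𝟙 _ := by
  rw [← L.otHom_comp, h]; simp [L.otHom_id]

lemma LD.cancelPaR (L : LD C) {X Y A : C} {u : X ⟶ Y} {v : Y ⟶ X} (h : u ≫ v = 𝟙 X) :
    L.paHom u (𝟙 A) ≫ L.paHom v (𝟙 A) = 𝟙 _ := by
  rw [← L.paHom_comp, h]; simp [L.paHom_id]

lemma LD.cancelPaL (L : LD C) {X Y A : C} {u : X ⟶ Y} {v : Y ⟶ X} (h : u ≫ v = 𝟙 X) :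
    L.paHom (𝟙 A) u ≫ L.paHom (𝟙 A) v = 𝟙 _ := by
  rw [← L.paHom_comp, h]; simp [L.paHom_id]

lemma LD.cancelOtR_assoc (L : LD C) {X Y A Q : C} {u : X ⟶ Y} {v : Y ⟶ X} (h : u ≫ v = 𝟙 X)
    (f : L.ot X A ⟶ Q) : L.otHom u (𝟙 A) ≫ L.otHom v (𝟙 A) ≫ f = f := by
  rw [← Category.assoc, L.cancelOtR h, Category.id_comp]

lemma LD.cancelOtL_assoc (L : LD C) {X Y A Q : C} {u : X ⟶ Y} {v : Y ⟶ X} (h : u ≫ v = 𝟙 X)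
    (f : L.ot A X ⟶ Q) : L.otHom (𝟙 A) u ≫ L.otHom (𝟙 A) v ≫ f = f := by
  rw [← Category.assoc, L.cancelOtL h, Category.id_comp]

lemma LD.cancelPaR_assoc (L : LD C) {X Y A Q : C} {u : X ⟶ Y} {v : Y ⟶ X} (h : u ≫ v = 𝟙 X)
    (f : L.pa X A ⟶ Q) : L.paHom u (𝟙 A) ≫ L.paHom v (𝟙 A) ≫ f = f := by
  rw [← Category.assoc, L.cancelPaR h, Category.id_comp]

lemma LD.cancelPaL_assoc (L : LD C) {X Y A Q : C} {u : X ⟶ Y} {v : Y ⟶ X} (h : u ≫ v = 𝟙 X)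
    (f : L.pa A X ⟶ Q) : L.paHom (𝟙 A) u ≫ L.paHom (𝟙 A) v ≫ f = f := by
  rw [← Category.assoc, L.cancelPaL h, Category.id_comp]

lemma LD.αInv_natural (L : LD C) {A A' B B' E E' : C} (f : A ⟶ A') (g : B ⟶ B') (h : E ⟶ E') :
    L.otHom (L.otHom f g) h ≫ L.αInv A' B' E' = L.αInv A B E ≫ L.otHom f (L.otHom g h) := by
  rw [← Category.id_comp (L.otHom (L.otHom f g) h ≫ L.αInv A' B' E'), ← L.αInv_α A B E,
    Category.assoc, ← Category.assoc (L.α A B E), ← L.α_natural f g h]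
  simp only [Category.assoc, L.α_αInv, Category.comp_id]

lemma LD.pαInv_natural (L : LD C) {A A' B B' E E' : C} (f : A ⟶ A') (g : B ⟶ B') (h : E ⟶ E') :
    L.paHom (L.paHom f g) h ≫ L.pαInv A' B' E' = L.pαInv A B E ≫ L.paHom f (L.paHom g h) := by
  rw [← Category.id_comp (L.paHom (L.paHom f g) h ≫ L.pαInv A' B' E'), ← L.pαInv_pα A B E,
    Category.assoc, ← Category.assoc (L.pα A B E), ← L.pα_natural f g h]
  simp only [Category.assoc, L.pα_pαInv, Category.comp_id]

/-- P1 variant: `α⁻¹ ≫ (1 ⊗ α) ≫ α = α ≫ (α⁻¹ ⊗ 1)`. -/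
lemma LD.V2 (L : LD C) (A B E D : C) :
    L.αInv A B (L.ot E D) ≫ L.otHom (𝟙 A) (L.α B E D) ≫ L.α A (L.ot B E) D =
    L.α (L.ot A B) E D ≫ L.otHom (L.αInv A B E) (𝟙 D) := by
  calc L.αInv A B (L.ot E D) ≫ L.otHom (𝟙 A) (L.α B E D) ≫ L.α A (L.ot B E) D
      = L.αInv A B (L.ot E D) ≫ (L.otHom (𝟙 A) (L.α B E D) ≫ L.α A (L.ot B E) D ≫
          L.otHom (L.α A B E) (𝟙 D)) ≫ L.otHom (L.αInv A B E) (𝟙 D) := by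
        simp only [Category.assoc, L.cancelOtR (L.α_αInv A B E), Category.comp_id]
    _ = L.αInv A B (L.ot E D) ≫ (L.α A B (L.ot E D) ≫ L.α (L.ot A B) E D) ≫
          L.otHom (L.αInv A B E) (𝟙 D) := by rw [← L.P1]
    _ = L.α (L.ot A B) E D ≫ L.otHom (L.αInv A B E) (𝟙 D) := by
        simp only [Category.assoc]; rw [L.αInv_α_assoc]

/-- P1 variant: `α⁻¹ ≫ (1 ⊗ α⁻¹) ≫ α = (α ⊗ 1) ≫ α⁻¹`. -/
lemma LD.V3 (L : LD C) (A B E D : C) :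
    L.αInv A (L.ot B E) D ≫ L.otHom (𝟙 A) (L.αInv B E D) ≫ L.α A B (L.ot E D) =
    L.otHom (L.α A B E) (𝟙 D) ≫ L.αInv (L.ot A B) E D := by
  calc L.αInv A (L.ot B E) D ≫ L.otHom (𝟙 A) (L.αInv B E D) ≫ L.α A B (L.ot E D)
      = L.αInv A (L.ot B E) D ≫ L.otHom (𝟙 A) (L.αInv B E D) ≫
          ((L.α A B (L.ot E D) ≫ L.α (L.ot A B) E D) ≫ L.αInv (L.ot A B) E D) := by
        simp only [Category.assoc, L.α_αInv, Category.comp_id]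
    _ = L.αInv A (L.ot B E) D ≫ L.otHom (𝟙 A) (L.αInv B E D) ≫
          ((L.otHom (𝟙 A) (L.α B E D) ≫ L.α A (L.ot B E) D ≫ L.otHom (L.α A B E) (𝟙 D)) ≫
            L.αInv (L.ot A B) E D) := by rw [L.P1]
    _ = L.otHom (L.α A B E) (𝟙 D) ≫ L.αInv (L.ot A B) E D := by
        simp only [Category.assoc, L.cancelOtL_assoc (L.αInv_α B E D), L.αInv_α_assoc]

/-- P1 variant: `α ≫ (α ⊗ 1) ≫ α⁻¹ = (1 ⊗ α⁻¹) ≫ α`. -/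
lemma LD.V4 (L : LD C) (A B E D : C) :
    L.α A (L.ot B E) D ≫ L.otHom (L.α A B E) (𝟙 D) ≫ L.αInv (L.ot A B) E D =
    L.otHom (𝟙 A) (L.αInv B E D) ≫ L.α A B (L.ot E D) := by
  rw [← L.V3, L.α_αInv_assoc]

/-- P1 variant: `α ≫ (α⁻¹ ⊗ 1) ≫ α⁻¹ = α⁻¹ ≫ (1 ⊗ α)`. -/
lemma LD.V5 (L : LD C) (A B E D : C) :
    L.α (L.ot A B) E D ≫ L.otHom (L.αInv A B E) (𝟙 D) ≫ L.αInv A (L.ot B E) D =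
    L.αInv A B (L.ot E D) ≫ L.otHom (𝟙 A) (L.α B E D) := by
  rw [← reassoc_of% (L.V2 A B E D)]
  simp only [Category.assoc, L.α_αInv, Category.comp_id]

/-- Inverse pentagon. -/
lemma LD.V6 (L : LD C) (A B E D : C) :
    L.αInv (L.ot A B) E D ≫ L.αInv A B (L.ot E D) =
    L.otHom (L.αInv A B E) (𝟙 D) ≫ L.αInv A (L.ot B E) D ≫ L.otHom (𝟙 A) (L.αInv B E D) := by
  calc L.αInv (L.ot A B) E D ≫ L.αInv A B (L.ot E D)
      = (L.otHom (L.αInv A B E) (𝟙 D) ≫ (L.otHom (L.α A B E) (𝟙 D) ≫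
          L.αInv (L.ot A B) E D)) ≫ L.αInv A B (L.ot E D) := by
        simp only [Category.assoc]
        rw [L.cancelOtR_assoc (L.αInv_α A B E)]
    _ = (L.otHom (L.αInv A B E) (𝟙 D) ≫ (L.αInv A (L.ot B E) D ≫
          L.otHom (𝟙 A) (L.αInv B E D) ≫ L.α A B (L.ot E D))) ≫ L.αInv A B (L.ot E D) := by
        rw [← L.V3]
    _ = L.otHom (L.αInv A B E) (𝟙 D) ≫ L.αInv A (L.ot B E) D ≫ L.otHom (𝟙 A) (L.αInv B E D) := by
        simp only [Category.assoc, L.α_αInv, Category.comp_id]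

/-- P8 variant. -/
lemma LD.V2p (L : LD C) (A B E D : C) :
    L.pαInv A B (L.pa E D) ≫ L.paHom (𝟙 A) (L.pα B E D) ≫ L.pα A (L.pa B E) D =
    L.pα (L.pa A B) E D ≫ L.paHom (L.pαInv A B E) (𝟙 D) := by
  calc L.pαInv A B (L.pa E D) ≫ L.paHom (𝟙 A) (L.pα B E D) ≫ L.pα A (L.pa B E) D
      = L.pαInv A B (L.pa E D) ≫ (L.paHom (𝟙 A) (L.pα B E D) ≫ L.pα A (L.pa B E) D ≫
          L.paHom (L.pα A B E) (𝟙 D)) ≫ L.paHom (L.pαInv A B E) (𝟙 D) := by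
        simp only [Category.assoc, L.cancelPaR (L.pα_pαInv A B E), Category.comp_id]
    _ = L.pαInv A B (L.pa E D) ≫ (L.pα A B (L.pa E D) ≫ L.pα (L.pa A B) E D) ≫
          L.paHom (L.pαInv A B E) (𝟙 D) := by rw [← L.P8]
    _ = L.pα (L.pa A B) E D ≫ L.paHom (L.pαInv A B E) (𝟙 D) := by
        simp only [Category.assoc]; rw [L.pαInv_pα_assoc]

/-- P8 variant. -/
lemma LD.V3p (L : LD C) (A B E D : C) :
    L.pαInv A (L.pa B E) D ≫ L.paHom (𝟙 A) (L.pαInv B E D) ≫ L.pα A B (L.pa E D) =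
    L.paHom (L.pα A B E) (𝟙 D) ≫ L.pαInv (L.pa A B) E D := by
  calc L.pαInv A (L.pa B E) D ≫ L.paHom (𝟙 A) (L.pαInv B E D) ≫ L.pα A B (L.pa E D)
      = L.pαInv A (L.pa B E) D ≫ L.paHom (𝟙 A) (L.pαInv B E D) ≫
          ((L.pα A B (L.pa E D) ≫ L.pα (L.pa A B) E D) ≫ L.pαInv (L.pa A B) E D) := by
        simp only [Category.assoc, L.pα_pαInv, Category.comp_id]
    _ = L.pαInv A (L.pa B E) D ≫ L.paHom (𝟙 A) (L.pαInv B E D) ≫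
          ((L.paHom (𝟙 A) (L.pα B E D) ≫ L.pα A (L.pa B E) D ≫ L.paHom (L.pα A B E) (𝟙 D)) ≫
            L.pαInv (L.pa A B) E D) := by rw [L.P8]
    _ = L.paHom (L.pα A B E) (𝟙 D) ≫ L.pαInv (L.pa A B) E D := by
        simp only [Category.assoc, L.cancelPaL_assoc (L.pαInv_pα B E D), L.pαInv_pα_assoc]

/-- P8 variant. -/
lemma LD.V4p (L : LD C) (A B E D : C) :
    L.pα A (L.pa B E) D ≫ L.paHom (L.pα A B E) (𝟙 D) ≫ L.pαInv (L.pa A B) E D =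
    L.paHom (𝟙 A) (L.pαInv B E D) ≫ L.pα A B (L.pa E D) := by
  rw [← L.V3p, L.pα_pαInv_assoc]

/-- P8 variant. -/
lemma LD.V5p (L : LD C) (A B E D : C) :
    L.pα (L.pa A B) E D ≫ L.paHom (L.pαInv A B E) (𝟙 D) ≫ L.pαInv A (L.pa B E) D =
    L.pαInv A B (L.pa E D) ≫ L.paHom (𝟙 A) (L.pα B E D) := by
  rw [← reassoc_of% (L.V2p A B E D)]
  simp only [Category.assoc, L.pα_pαInv, Category.comp_id]

/-- Inverse pentagon, ⅋ version. -/
lemma LD.V6p (L : LD C) (A B E D : C) :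
    L.pαInv (L.pa A B) E D ≫ L.pαInv A B (L.pa E D) =
    L.paHom (L.pαInv A B E) (𝟙 D) ≫ L.pαInv A (L.pa B E) D ≫ L.paHom (𝟙 A) (L.pαInv B E D) := by
  calc L.pαInv (L.pa A B) E D ≫ L.pαInv A B (L.pa E D)
      = (L.paHom (L.pαInv A B E) (𝟙 D) ≫ (L.paHom (L.pα A B E) (𝟙 D) ≫
          L.pαInv (L.pa A B) E D)) ≫ L.pαInv A B (L.pa E D) := by
        simp only [Category.assoc]
        rw [L.cancelPaR_assoc (L.pαInv_pα A B E)]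
    _ = (L.paHom (L.pαInv A B E) (𝟙 D) ≫ (L.pαInv A (L.pa B E) D ≫
          L.paHom (𝟙 A) (L.pαInv B E D) ≫ L.pα A B (L.pa E D))) ≫ L.pαInv A B (L.pa E D) := by
        rw [← L.V3p]
    _ = L.paHom (L.pαInv A B E) (𝟙 D) ≫ L.pαInv A (L.pa B E) D ≫
          L.paHom (𝟙 A) (L.pαInv B E D) := by
        simp only [Category.assoc, L.pα_pαInv, Category.comp_id]

/-- P4 variant. -/
lemma LD.W1 (L : LD C) (A B E D : C) :
    L.δl A (L.pa B E) D ≫ L.paHom (L.δl A B E) (𝟙 D) ≫ L.pαInv (L.ot A B) E D =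
    L.otHom (𝟙 A) (L.pαInv B E D) ≫ L.δl A B (L.pa E D) := by
  calc L.δl A (L.pa B E) D ≫ L.paHom (L.δl A B E) (𝟙 D) ≫ L.pαInv (L.ot A B) E D
      = L.otHom (𝟙 A) (L.pαInv B E D) ≫ L.otHom (𝟙 A) (L.pα B E D) ≫ L.δl A (L.pa B E) D ≫
          L.paHom (L.δl A B E) (𝟙 D) ≫ L.pαInv (L.ot A B) E D := by
        rw [L.cancelOtL_assoc (L.pαInv_pα B E D)]
    _ = L.otHom (𝟙 A) (L.pαInv B E D) ≫ L.δl A B (L.pa E D) ≫ L.pα (L.ot A B) E D ≫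
          L.pαInv (L.ot A B) E D := by rw [← reassoc_of% (L.P4 A B E D)]
    _ = L.otHom (𝟙 A) (L.pαInv B E D) ≫ L.δl A B (L.pa E D) := by
        simp only [Category.assoc, L.pα_pαInv, Category.comp_id]

/-- P6 variant. -/
lemma LD.W2 (L : LD C) (A B E D : C) :
    L.δl (L.pa A B) E D ≫ L.paHom (L.δr A B E) (𝟙 D) ≫ L.pαInv A (L.ot B E) D =
    L.δr A B (L.pa E D) ≫ L.paHom (𝟙 A) (L.δl B E D) := by
  rw [reassoc_of% (L.P6 A B E D)]
  simp only [Category.assoc, L.pα_pαInv, Category.comp_id]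

/-- P7 variant. -/
lemma LD.W3 (L : LD C) (A B E D : C) :
    L.δr (L.pa A B) E D ≫ L.pαInv A B (L.ot E D) =
    L.otHom (L.pαInv A B E) (𝟙 D) ≫ L.δr A (L.pa B E) D ≫ L.paHom (𝟙 A) (L.δr B E D) := by
  calc L.δr (L.pa A B) E D ≫ L.pαInv A B (L.ot E D)
      = L.otHom (L.pαInv A B E) (𝟙 D) ≫ (L.otHom (L.pα A B E) (𝟙 D) ≫
          L.δr (L.pa A B) E D) ≫ L.pαInv A B (L.ot E D) := by
        simp only [Category.assoc]
        rw [L.cancelOtR_assoc (L.pαInv_pα A B E)]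
    _ = L.otHom (L.pαInv A B E) (𝟙 D) ≫ L.δr A (L.pa B E) D ≫ L.paHom (𝟙 A) (L.δr B E D) ≫
          L.pα A B (L.ot E D) ≫ L.pαInv A B (L.ot E D) := by
        simp only [Category.assoc]
        rw [reassoc_of% (L.P7 A B E D)]
    _ = L.otHom (L.pαInv A B E) (𝟙 D) ≫ L.δr A (L.pa B E) D ≫ L.paHom (𝟙 A) (L.δr B E D) := by
        simp only [Category.assoc, L.pα_pαInv, Category.comp_id]

/-- P2 variant. -/
lemma LD.W4 (L : LD C) (A B E D : C) :
    L.αInv A B (L.pa E D) ≫ L.otHom (𝟙 A) (L.δl B E D) ≫ L.δl A (L.ot B E) D =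
    L.δl (L.ot A B) E D ≫ L.paHom (L.αInv A B E) (𝟙 D) := by
  calc L.αInv A B (L.pa E D) ≫ L.otHom (𝟙 A) (L.δl B E D) ≫ L.δl A (L.ot B E) D
      = L.αInv A B (L.pa E D) ≫ (L.otHom (𝟙 A) (L.δl B E D) ≫ L.δl A (L.ot B E) D ≫
          L.paHom (L.α A B E) (𝟙 D)) ≫ L.paHom (L.αInv A B E) (𝟙 D) := by
        simp only [Category.assoc, L.cancelPaR (L.α_αInv A B E), Category.comp_id]
    _ = L.αInv A B (L.pa E D) ≫ (L.α A B (L.pa E D) ≫ L.δl (L.ot A B) E D) ≫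
          L.paHom (L.αInv A B E) (𝟙 D) := by rw [← L.P2]
    _ = L.δl (L.ot A B) E D ≫ L.paHom (L.αInv A B E) (𝟙 D) := by
        simp only [Category.assoc]; rw [L.αInv_α_assoc]

/-- P3 variant. -/
lemma LD.W5 (L : LD C) (A B E D : C) :
    L.αInv A (L.pa B E) D ≫ L.otHom (𝟙 A) (L.δr B E D) ≫ L.δl A B (L.ot E D) =
    L.otHom (L.δl A B E) (𝟙 D) ≫ L.δr (L.ot A B) E D := by
  rw [L.P3, L.αInv_α_assoc]

/-- P5 variant. -/
lemma LD.W6 (L : LD C) (A B E D : C) :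
    L.αInv (L.pa A B) E D ≫ L.δr A B (L.ot E D) =
    L.otHom (L.δr A B E) (𝟙 D) ≫ L.δr A (L.ot B E) D ≫ L.paHom (𝟙 A) (L.αInv B E D) := by
  calc L.αInv (L.pa A B) E D ≫ L.δr A B (L.ot E D)
      = L.αInv (L.pa A B) E D ≫ L.δr A B (L.ot E D) ≫ L.paHom (𝟙 A) (L.α B E D) ≫
          L.paHom (𝟙 A) (L.αInv B E D) := by
        rw [L.cancelPaL (L.α_αInv B E D)]
        simp only [Category.comp_id]
    _ = L.αInv (L.pa A B) E D ≫ L.α (L.pa A B) E D ≫ L.otHom (L.δr A B E) (𝟙 D) ≫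
          L.δr A (L.ot B E) D ≫ L.paHom (𝟙 A) (L.αInv B E D) := by
        rw [reassoc_of% (L.P5 A B E D)]
    _ = L.otHom (L.δr A B E) (𝟙 D) ≫ L.δr A (L.ot B E) D ≫ L.paHom (𝟙 A) (L.αInv B E D) := by
        rw [L.αInv_α_assoc]

/-- Main lemma, ⊗ version: an atomic morphism composed with `τ^i_u` is analysable. -/
lemma atomic_comp_tau (L : LD C) (hTidy : L.Tidy) :
    ∀ (w : YW C) (Y Z : C) {W' : C} (h : W' ⟶ Hot L (L.ot Y Z) w) (hh : Atomic L h),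
      OtAnalysable L (IdOtSet L) (h ≫ tau L (𝟙 (L.ot Y Z)) w) := by
  intro w
  induction w with
  | nil =>
    intro Y Z W' h hh
    simp only [Hot] at h
    simp only [tau, Category.comp_id]
    rcases atomic_cases hh with ⟨A,B,E,rfl,h2,hform⟩ | ⟨A,B,E,rfl,h2,hform⟩
      | ⟨A,B,E,rfl,h2,hform⟩ | ⟨A,B,E,rfl,h2,hform⟩ | ⟨A,B,E,rfl,h2,hform⟩
      | ⟨A,B,E,rfl,h2,hform⟩ | ⟨A,W1,T1,h',rfl,h2,hat,hform⟩ | ⟨A,W1,T1,h',rfl,h2,hat,hform⟩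
      | ⟨A,W1,T1,h',rfl,h2,hat,hform⟩ | ⟨A,W1,T1,h',rfl,h2,hat,hform⟩
    · -- α
      obtain ⟨hY, rfl⟩ := hTidy.1 _ _ _ _ h2
      subst hY
      refine otAnalysable_mk L B E (.a A .nil) (𝟙 (L.ot A B)) (𝟙 E) ?_
      rw [hform]
      simp [tau, Lot, Rot, Hot, L.otHom_id]
    · -- α⁻¹
      obtain ⟨rfl, hZ⟩ := hTidy.1 _ _ _ _ h2
      subst hZ
      refine otAnalysable_mk L A B (.ainv E .nil) (𝟙 A) (𝟙 (L.ot B E)) ?_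
      rw [hform]
      simp [tau, Lot, Rot, Hot, L.otHom_id]
    · exact absurd h2.symm (hTidy.2.2 _ _ _ _)
    · exact absurd h2.symm (hTidy.2.2 _ _ _ _)
    · exact absurd h2.symm (hTidy.2.2 _ _ _ _)
    · exact absurd h2.symm (hTidy.2.2 _ _ _ _)
    · -- 𝟙 ⊗ h'
      obtain ⟨rfl, hZ⟩ := hTidy.1 _ _ _ _ h2
      subst hZ
      refine otAnalysable_mk L A W1 .nil (𝟙 A) h' ?_
      rw [hform]
      simp [tau, Lot, Rot, Hot, L.otHom_id]
    · -- h' ⊗ 𝟙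
      obtain ⟨hY, rfl⟩ := hTidy.1 _ _ _ _ h2
      subst hY
      refine otAnalysable_mk L W1 A .nil h' (𝟙 A) ?_
      rw [hform]
      simp [tau, Lot, Rot, Hot, L.otHom_id]
    · exact absurd h2.symm (hTidy.2.2 _ _ _ _)
    · exact absurd h2.symm (hTidy.2.2 _ _ _ _)
  | a A0 w' IH =>
    intro Y Z W' h hh
    rcases atomic_cases hh with ⟨A,B,E,rfl,h2,hform⟩ | ⟨A,B,E,rfl,h2,hform⟩
      | ⟨A,B,E,rfl,h2,hform⟩ | ⟨A,B,E,rfl,h2,hform⟩ | ⟨A,B,E,rfl,h2,hform⟩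
      | ⟨A,B,E,rfl,h2,hform⟩ | ⟨A,W1,T1,h',rfl,h2,hat,hform⟩ | ⟨A,W1,T1,h',rfl,h2,hat,hform⟩
      | ⟨A,W1,T1,h',rfl,h2,hat,hform⟩ | ⟨A,W1,T1,h',rfl,h2,hat,hform⟩
    · -- α
      simp only [Hot] at h2
      obtain ⟨hA, hE⟩ := hTidy.1 _ _ _ _ h2
      subst hA; subst hE
      refine otAnalysable_mk L Y Z (.a A (.a B w')) (L.α A B (Lot L Y w')) (𝟙 (Rot L Z w')) ?_
      rw [hform]
      simp only [eqToHom_refl, Category.comp_id, Category.id_comp, tau, Lot, Rot, Hot,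
        L.otHom_id_comp, Category.assoc]
      rw [show L.otHom (𝟙 (L.ot A B)) (tau L (𝟙 (L.ot Y Z)) w') =
            L.otHom (L.otHom (𝟙 A) (𝟙 B)) (tau L (𝟙 (L.ot Y Z)) w') by rw [L.otHom_id],
          ← reassoc_of% (L.α_natural (𝟙 A) (𝟙 B) (tau L (𝟙 (L.ot Y Z)) w')), L.P1]
    · -- α⁻¹
      simp only [Hot] at h2
      obtain ⟨hA, hBE⟩ := hTidy.1 _ _ _ _ h2
      subst hA
      cases w' with
      | nil =>
        simp only [Hot] at hBE
        obtain ⟨hY, hZ⟩ := hTidy.1 _ _ _ _ hBE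
        subst hY; subst hZ
        refine otAnalysable_mk L (L.ot A B) E .nil (𝟙 (L.ot A B)) (𝟙 E) ?_
        rw [hform]
        simp [tau, Hot, Lot, Rot, L.otHom_id, L.αInv_α]
      | a A2 w'' =>
        simp only [Hot] at hBE
        obtain ⟨hB, hE⟩ := hTidy.1 _ _ _ _ hBE
        subst hB; subst hE
        refine otAnalysable_mk L Y Z (.a (L.ot A B) w'') (L.αInv A B (Lot L Y w''))
          (𝟙 (Rot L Z w'')) ?_
        rw [hform]
        simp only [eqToHom_refl, Category.comp_id, Category.id_comp, tau, Lot, Rot, Hot,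
          L.otHom_id_comp, Category.assoc]
        rw [eqToHom_refl _ h2, Category.id_comp]
        rw [← reassoc_of% (L.αInv_natural (𝟙 A) (𝟙 B) (tau L (𝟙 (L.ot Y Z)) w'')), L.V2,
          L.otHom_id]
      | ainv A2 w'' =>
        simp only [Hot] at hBE
        obtain ⟨hB, hE⟩ := hTidy.1 _ _ _ _ hBE
        subst hB; subst hE
        refine otAnalysable_mk L Y Z (.ainv E (.a A w'')) (𝟙 (L.ot A (Lot L Y w'')))
          (𝟙 (L.ot (Rot L Z w'') E)) ?_
        rw [hform]
        simp only [eqToHom_refl, Category.comp_id, Category.id_comp, tau, Lot, Rot, Hot,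
          L.otHom_id_comp, L.otHom_comp_id, Category.assoc]
        rw [eqToHom_refl _ h2, Category.id_comp]
        rw [← reassoc_of% (L.αInv_natural (𝟙 A) (tau L (𝟙 (L.ot Y Z)) w'') (𝟙 E)), L.V3]
        simp [L.otHom_id]
    · exact absurd h2.symm (hTidy.2.2 _ _ _ _)
    · exact absurd h2.symm (hTidy.2.2 _ _ _ _)
    · exact absurd h2.symm (hTidy.2.2 _ _ _ _)
    · exact absurd h2.symm (hTidy.2.2 _ _ _ _)
    · -- 𝟙 ⊗ h'
      simp only [Hot] at h2
      obtain ⟨hA, hT⟩ := hTidy.1 _ _ _ _ h2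
      subst hA; subst hT
      obtain ⟨X2, Y2, Z2, i2, ⟨hE2, rfl⟩, v, Q1, Q2, g1, g2, hP2, hT2, heq⟩ := IH Y Z h' hat
      subst hE2
      obtain ⟨hQ1, hQ2⟩ := hTidy.1 _ _ _ _ hT2
      subst hQ1; subst hQ2; subst hP2
      simp only [eqToHom_refl, Category.comp_id, Category.id_comp] at heq
      refine otAnalysable_mk L Y2 Z2 (.a A v) (L.otHom (𝟙 A) g1) g2 ?_
      rw [hform]
      simp only [eqToHom_refl, Category.comp_id, Category.id_comp, tau, Lot, Rot, Hot,
        Category.assoc]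
      rw [← reassoc_of% (L.otHom_id_comp (A := A) h' (tau L (𝟙 (L.ot Y Z)) w')), heq,
        reassoc_of% (L.otHom_id_comp (A := A) (tau L (𝟙 (L.ot Y2 Z2)) v) (L.otHom g1 g2)),
        L.α_natural (𝟙 A) g1 g2]
    · -- h' ⊗ 𝟙
      simp only [Hot] at h2
      obtain ⟨hT, hA⟩ := hTidy.1 _ _ _ _ h2
      subst hT; subst hA
      refine otAnalysable_mk L Y Z (.a W1 w') (L.otHom h' (𝟙 (Lot L Y w')))
        (𝟙 (Rot L Z w')) ?_
      rw [hform]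
      simp only [eqToHom_refl, Category.comp_id, Category.id_comp, tau, Lot, Rot, Hot,
        L.otHom_id_comp, Category.assoc]
      rw [reassoc_of% (L.otHom_exch h' (tau L (𝟙 (L.ot Y Z)) w')),
        show L.otHom h' (𝟙 (L.ot (Lot L Y w') (Rot L Z w'))) =
          L.otHom h' (L.otHom (𝟙 (Lot L Y w')) (𝟙 (Rot L Z w'))) by rw [L.otHom_id],
        L.α_natural h' (𝟙 _) (𝟙 _)]
    · exact absurd h2.symm (hTidy.2.2 _ _ _ _)
    · exact absurd h2.symm (hTidy.2.2 _ _ _ _)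
  | ainv A0 w' IH =>
    intro Y Z W' h hh
    rcases atomic_cases hh with ⟨A,B,E,rfl,h2,hform⟩ | ⟨A,B,E,rfl,h2,hform⟩
      | ⟨A,B,E,rfl,h2,hform⟩ | ⟨A,B,E,rfl,h2,hform⟩ | ⟨A,B,E,rfl,h2,hform⟩
      | ⟨A,B,E,rfl,h2,hform⟩ | ⟨A,W1,T1,h',rfl,h2,hat,hform⟩ | ⟨A,W1,T1,h',rfl,h2,hat,hform⟩
      | ⟨A,W1,T1,h',rfl,h2,hat,hform⟩ | ⟨A,W1,T1,h',rfl,h2,hat,hform⟩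
    · -- α
      simp only [Hot] at h2
      obtain ⟨hAB, hE⟩ := hTidy.1 _ _ _ _ h2
      subst hE
      cases w' with
      | nil =>
        simp only [Hot] at hAB
        obtain ⟨hY, hZ⟩ := hTidy.1 _ _ _ _ hAB
        subst hY; subst hZ
        refine otAnalysable_mk L A (L.ot B E) .nil (𝟙 A) (𝟙 (L.ot B E)) ?_
        rw [hform]
        simp [tau, Hot, Lot, Rot, L.otHom_id, L.α_αInv]
      | a A2 w'' =>
        simp only [Hot] at hAB
        obtain ⟨hA, hB⟩ := hTidy.1 _ _ _ _ hAB
        subst hA; subst hB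
        refine otAnalysable_mk L Y Z (.a A (.ainv E w'')) (𝟙 (L.ot A (Lot L Y w'')))
          (𝟙 (L.ot (Rot L Z w'') E)) ?_
        rw [hform]
        simp only [eqToHom_refl, Category.comp_id, Category.id_comp, tau, Lot, Rot, Hot,
          L.otHom_id_comp, L.otHom_comp_id, Category.assoc]
        rw [eqToHom_refl _ h2, Category.id_comp]
        rw [← reassoc_of% (L.α_natural (𝟙 A) (tau L (𝟙 (L.ot Y Z)) w'') (𝟙 E)), L.V4]
        simp [L.otHom_id]
      | ainv A2 w'' =>
        simp only [Hot] at hAB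
        obtain ⟨hA, hB⟩ := hTidy.1 _ _ _ _ hAB
        subst hA; subst hB
        refine otAnalysable_mk L Y Z (.ainv (L.ot B E) w'') (𝟙 (Lot L Y w''))
          (L.α (Rot L Z w'') B E) ?_
        rw [hform]
        simp only [eqToHom_refl, Category.comp_id, Category.id_comp, tau, Lot, Rot, Hot,
          L.otHom_id_comp, L.otHom_comp_id, Category.assoc]
        rw [eqToHom_refl _ h2, Category.id_comp]
        rw [← reassoc_of% (L.α_natural (tau L (𝟙 (L.ot Y Z)) w'') (𝟙 B) (𝟙 E)), L.V5,
          L.otHom_id]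
    · -- α⁻¹
      simp only [Hot] at h2
      obtain ⟨hA, hBE⟩ := hTidy.1 _ _ _ _ h2
      subst hA; subst hBE
      refine otAnalysable_mk L Y Z (.ainv E (.ainv B w')) (𝟙 (Lot L Y w'))
        (L.αInv (Rot L Z w') B E) ?_
      rw [hform]
      simp only [eqToHom_refl, Category.comp_id, Category.id_comp, tau, Lot, Rot, Hot,
        L.otHom_id_comp, L.otHom_comp_id, Category.assoc]
      rw [show L.otHom (tau L (𝟙 (L.ot Y Z)) w') (𝟙 (L.ot B E)) =
            L.otHom (tau L (𝟙 (L.ot Y Z)) w') (L.otHom (𝟙 B) (𝟙 E)) by rw [L.otHom_id],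
        ← reassoc_of% (L.αInv_natural (tau L (𝟙 (L.ot Y Z)) w') (𝟙 B) (𝟙 E)), L.V6]
    · exact absurd h2.symm (hTidy.2.2 _ _ _ _)
    · exact absurd h2.symm (hTidy.2.2 _ _ _ _)
    · exact absurd h2.symm (hTidy.2.2 _ _ _ _)
    · exact absurd h2.symm (hTidy.2.2 _ _ _ _)
    · -- 𝟙 ⊗ h'
      simp only [Hot] at h2
      obtain ⟨hA, hT⟩ := hTidy.1 _ _ _ _ h2
      subst hA; subst hT
      refine otAnalysable_mk L Y Z (.ainv W1 w') (𝟙 (Lot L Y w'))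
        (L.otHom (𝟙 (Rot L Z w')) h') ?_
      rw [hform]
      simp only [eqToHom_refl, Category.comp_id, Category.id_comp, tau, Lot, Rot, Hot,
        L.otHom_id_comp, L.otHom_comp_id, Category.assoc]
      rw [← reassoc_of% (L.otHom_exch (tau L (𝟙 (L.ot Y Z)) w') h'),
        show L.otHom (𝟙 (L.ot (Lot L Y w') (Rot L Z w'))) h' =
          L.otHom (L.otHom (𝟙 (Lot L Y w')) (𝟙 (Rot L Z w'))) h' by rw [L.otHom_id],
        L.αInv_natural (𝟙 _) (𝟙 _) h']
    · -- h' ⊗ 𝟙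
      simp only [Hot] at h2
      obtain ⟨hT, hA⟩ := hTidy.1 _ _ _ _ h2
      subst hT; subst hA
      obtain ⟨X2, Y2, Z2, i2, ⟨hE2, rfl⟩, v, Q1, Q2, g1, g2, hP2, hT2, heq⟩ := IH Y Z h' hat
      subst hE2
      obtain ⟨hQ1, hQ2⟩ := hTidy.1 _ _ _ _ hT2
      subst hQ1; subst hQ2; subst hP2
      simp only [eqToHom_refl, Category.comp_id, Category.id_comp] at heq
      refine otAnalysable_mk L Y2 Z2 (.ainv A v) g1 (L.otHom g2 (𝟙 A)) ?_
      rw [hform]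
      simp only [eqToHom_refl, Category.comp_id, Category.id_comp, tau, Lot, Rot, Hot,
        Category.assoc]
      rw [← reassoc_of% (L.otHom_comp_id (A := A) h' (tau L (𝟙 (L.ot Y Z)) w')), heq,
        reassoc_of% (L.otHom_comp_id (A := A) (tau L (𝟙 (L.ot Y2 Z2)) v) (L.otHom g1 g2)),
        L.αInv_natural g1 g2 (𝟙 A)]
    · exact absurd h2.symm (hTidy.2.2 _ _ _ _)
    · exact absurd h2.symm (hTidy.2.2 _ _ _ _)

/-- Main lemma, ⅋ version: an atomic morphism composed with `κ^i_u` is analysable. -/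
lemma atomic_comp_kappa (L : LD C) (hTidy : L.Tidy) :
    ∀ (w : ZW C) (Y Z : C) {W' : C} (h : W' ⟶ Hpa L (L.pa Y Z) w) (hh : Atomic L h),
      PaAnalysable L (IdPaSet L) (h ≫ kappa L (𝟙 (L.pa Y Z)) w) := by
  intro w
  induction w with
  | nil =>
    intro Y Z W' h hh
    simp only [Hpa] at h
    simp only [kappa, Category.comp_id]
    rcases atomic_cases hh with ⟨A,B,E,rfl,h2,hform⟩ | ⟨A,B,E,rfl,h2,hform⟩
      | ⟨A,B,E,rfl,h2,hform⟩ | ⟨A,B,E,rfl,h2,hform⟩ | ⟨A,B,E,rfl,h2,hform⟩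
      | ⟨A,B,E,rfl,h2,hform⟩ | ⟨A,W1,T1,h',rfl,h2,hat,hform⟩ | ⟨A,W1,T1,h',rfl,h2,hat,hform⟩
      | ⟨A,W1,T1,h',rfl,h2,hat,hform⟩ | ⟨A,W1,T1,h',rfl,h2,hat,hform⟩
    · exact absurd h2 (hTidy.2.2 _ _ _ _)
    · exact absurd h2 (hTidy.2.2 _ _ _ _)
    · -- pα
      obtain ⟨hY, rfl⟩ := hTidy.2.1 _ _ _ _ h2
      subst hY
      refine paAnalysable_mk L B E (.pa A .nil) (𝟙 (L.pa A B)) (𝟙 E) ?_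
      rw [hform]
      simp [kappa, Hpa, Lpa, Rpa, L.paHom_id]
    · -- pα⁻¹
      obtain ⟨rfl, hZ⟩ := hTidy.2.1 _ _ _ _ h2
      subst hZ
      refine paAnalysable_mk L A B (.painv E .nil) (𝟙 A) (𝟙 (L.pa B E)) ?_
      rw [hform]
      simp [kappa, Hpa, Lpa, Rpa, L.paHom_id]
    · -- δl
      obtain ⟨hY, rfl⟩ := hTidy.2.1 _ _ _ _ h2
      subst hY
      refine paAnalysable_mk L B E (.dl A .nil) (𝟙 (L.ot A B)) (𝟙 E) ?_
      rw [hform]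
      simp [kappa, Hpa, Lpa, Rpa, L.paHom_id, L.otHom_id]
    · -- δr
      obtain ⟨rfl, hZ⟩ := hTidy.2.1 _ _ _ _ h2
      subst hZ
      refine paAnalysable_mk L A B (.dr E .nil) (𝟙 A) (𝟙 (L.ot B E)) ?_
      rw [hform]
      simp [kappa, Hpa, Lpa, Rpa, L.paHom_id, L.otHom_id]
    · exact absurd h2 (hTidy.2.2 _ _ _ _)
    · exact absurd h2 (hTidy.2.2 _ _ _ _)
    · -- 𝟙 ⅋ h'
      obtain ⟨rfl, hZ⟩ := hTidy.2.1 _ _ _ _ h2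
      subst hZ
      refine paAnalysable_mk L A W1 .nil (𝟙 A) h' ?_
      rw [hform]
      simp [kappa, Hpa, Lpa, Rpa, L.paHom_id]
    · -- h' ⅋ 𝟙
      obtain ⟨hY, rfl⟩ := hTidy.2.1 _ _ _ _ h2
      subst hY
      refine paAnalysable_mk L W1 A .nil h' (𝟙 A) ?_
      rw [hform]
      simp [kappa, Hpa, Lpa, Rpa, L.paHom_id]
  | pa A0 w' IH =>
    intro Y Z W' h hh
    rcases atomic_cases hh with ⟨A,B,E,rfl,h2,hform⟩ | ⟨A,B,E,rfl,h2,hform⟩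
      | ⟨A,B,E,rfl,h2,hform⟩ | ⟨A,B,E,rfl,h2,hform⟩ | ⟨A,B,E,rfl,h2,hform⟩
      | ⟨A,B,E,rfl,h2,hform⟩ | ⟨A,W1,T1,h',rfl,h2,hat,hform⟩ | ⟨A,W1,T1,h',rfl,h2,hat,hform⟩
      | ⟨A,W1,T1,h',rfl,h2,hat,hform⟩ | ⟨A,W1,T1,h',rfl,h2,hat,hform⟩
    · exact absurd h2 (hTidy.2.2 _ _ _ _)
    · exact absurd h2 (hTidy.2.2 _ _ _ _)
    · -- pα
      simp only [Hpa] at h2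
      obtain ⟨hA, hE⟩ := hTidy.2.1 _ _ _ _ h2
      subst hA; subst hE
      refine paAnalysable_mk L Y Z (.pa A (.pa B w')) (L.pα A B (Lpa L Y w')) (𝟙 (Rpa L Z w')) ?_
      rw [hform]
      simp only [eqToHom_refl, Category.comp_id, Category.id_comp, kappa, Lpa, Rpa, Hpa,
        L.paHom_id_comp, Category.assoc]
      rw [show L.paHom (𝟙 (L.pa A B)) (kappa L (𝟙 (L.pa Y Z)) w') =
            L.paHom (L.paHom (𝟙 A) (𝟙 B)) (kappa L (𝟙 (L.pa Y Z)) w') by rw [L.paHom_id],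
          ← reassoc_of% (L.pα_natural (𝟙 A) (𝟙 B) (kappa L (𝟙 (L.pa Y Z)) w')), L.P8]
    · -- pα⁻¹
      simp only [Hpa] at h2
      obtain ⟨hA, hBE⟩ := hTidy.2.1 _ _ _ _ h2
      subst hA
      cases w' with
      | nil =>
        simp only [Hpa] at hBE
        obtain ⟨hY, hZ⟩ := hTidy.2.1 _ _ _ _ hBE
        subst hY; subst hZ
        refine paAnalysable_mk L (L.pa A B) E .nil (𝟙 (L.pa A B)) (𝟙 E) ?_
        rw [hform]
        simp [kappa, Hpa, Lpa, Rpa, L.paHom_id, L.pαInv_pα]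
      | pa A2 w'' =>
        simp only [Hpa] at hBE
        obtain ⟨hB, hE⟩ := hTidy.2.1 _ _ _ _ hBE
        subst hB; subst hE
        refine paAnalysable_mk L Y Z (.pa (L.pa A B) w'') (L.pαInv A B (Lpa L Y w''))
          (𝟙 (Rpa L Z w'')) ?_
        rw [hform]
        simp only [eqToHom_refl, Category.comp_id, Category.id_comp, kappa, Lpa, Rpa, Hpa,
          L.paHom_id_comp, Category.assoc]
        rw [eqToHom_refl _ h2, Category.id_comp]
        rw [← reassoc_of% (L.pαInv_natural (𝟙 A) (𝟙 B) (kappa L (𝟙 (L.pa Y Z)) w'')), L.V2p,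
          L.paHom_id]
      | painv A2 w'' =>
        simp only [Hpa] at hBE
        obtain ⟨hB, hE⟩ := hTidy.2.1 _ _ _ _ hBE
        subst hB; subst hE
        refine paAnalysable_mk L Y Z (.painv E (.pa A w'')) (𝟙 (L.pa A (Lpa L Y w'')))
          (𝟙 (L.pa (Rpa L Z w'') E)) ?_
        rw [hform]
        simp only [eqToHom_refl, Category.comp_id, Category.id_comp, kappa, Lpa, Rpa, Hpa,
          L.paHom_id_comp, L.paHom_comp_id, Category.assoc]
        rw [eqToHom_refl _ h2, Category.id_comp]
        rw [← reassoc_of% (L.pαInv_natural (𝟙 A) (kappa L (𝟙 (L.pa Y Z)) w'') (𝟙 E)), L.V3p]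
        simp [L.paHom_id]
      | dl A2 w'' => exact absurd hBE.symm (hTidy.2.2 _ _ _ _)
      | dr A2 w'' => exact absurd hBE.symm (hTidy.2.2 _ _ _ _)
    · -- δl
      simp only [Hpa] at h2
      obtain ⟨hA, hE⟩ := hTidy.2.1 _ _ _ _ h2
      subst hA; subst hE
      refine paAnalysable_mk L Y Z (.dl A (.pa B w')) (L.δl A B (Lpa L Y w')) (𝟙 (Rpa L Z w')) ?_
      rw [hform]
      simp only [eqToHom_refl, Category.comp_id, Category.id_comp, kappa, Lpa, Rpa, Hpa,
        L.otHom_id_comp, Category.assoc]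
      rw [show L.paHom (𝟙 (L.ot A B)) (kappa L (𝟙 (L.pa Y Z)) w') =
            L.paHom (L.otHom (𝟙 A) (𝟙 B)) (kappa L (𝟙 (L.pa Y Z)) w') by rw [L.otHom_id],
          ← reassoc_of% (L.δl_natural (𝟙 A) (𝟙 B) (kappa L (𝟙 (L.pa Y Z)) w')), L.P4]
    · -- δr
      simp only [Hpa] at h2
      obtain ⟨hA, hBE⟩ := hTidy.2.1 _ _ _ _ h2
      subst hA
      cases w' with
      | nil => exact absurd hBE (hTidy.2.2 _ _ _ _)
      | pa A2 w'' => exact absurd hBE (hTidy.2.2 _ _ _ _)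
      | painv A2 w'' => exact absurd hBE (hTidy.2.2 _ _ _ _)
      | dl A2 w'' =>
        simp only [Hpa] at hBE
        obtain ⟨hB, hE⟩ := hTidy.1 _ _ _ _ hBE
        subst hB; subst hE
        refine paAnalysable_mk L Y Z (.dl (L.pa A B) w'') (L.δr A B (Lpa L Y w''))
          (𝟙 (Rpa L Z w'')) ?_
        rw [hform]
        simp only [eqToHom_refl, Category.comp_id, Category.id_comp, kappa, Lpa, Rpa, Hpa,
          L.paHom_id_comp, L.otHom_id_comp, Category.assoc]
        rw [eqToHom_refl _ h2, Category.id_comp]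
        rw [← reassoc_of% (L.δr_natural (𝟙 A) (𝟙 B) (kappa L (𝟙 (L.pa Y Z)) w'')), ← L.P6,
          L.paHom_id]
      | dr A2 w'' =>
        simp only [Hpa] at hBE
        obtain ⟨hB, hE⟩ := hTidy.1 _ _ _ _ hBE
        subst hB; subst hE
        refine paAnalysable_mk L Y Z (.dr E (.pa A w'')) (𝟙 (L.pa A (Lpa L Y w'')))
          (𝟙 (L.ot (Rpa L Z w'') E)) ?_
        rw [hform]
        simp only [eqToHom_refl, Category.comp_id, Category.id_comp, kappa, Lpa, Rpa, Hpa,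
          L.paHom_id_comp, L.otHom_comp_id, Category.assoc]
        rw [eqToHom_refl _ h2, Category.id_comp]
        rw [← reassoc_of% (L.δr_natural (𝟙 A) (kappa L (𝟙 (L.pa Y Z)) w'') (𝟙 E)), ← L.P7]
        simp [L.paHom_id]
    · exact absurd h2 (hTidy.2.2 _ _ _ _)
    · exact absurd h2 (hTidy.2.2 _ _ _ _)
    · -- 𝟙 ⅋ h'
      simp only [Hpa] at h2
      obtain ⟨hA, hT⟩ := hTidy.2.1 _ _ _ _ h2
      subst hA; subst hT
      obtain ⟨X2, Y2, Z2, i2, ⟨hE2, rfl⟩, v, Q1, Q2, g1, g2, hP2, hT2, heq⟩ := IH Y Z h' hat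
      subst hE2
      obtain ⟨hQ1, hQ2⟩ := hTidy.2.1 _ _ _ _ hT2
      subst hQ1; subst hQ2; subst hP2
      simp only [eqToHom_refl, Category.comp_id, Category.id_comp] at heq
      refine paAnalysable_mk L Y2 Z2 (.pa A v) (L.paHom (𝟙 A) g1) g2 ?_
      rw [hform]
      simp only [eqToHom_refl, Category.comp_id, Category.id_comp, kappa, Lpa, Rpa, Hpa,
        Category.assoc]
      rw [← reassoc_of% (L.paHom_id_comp (A := A) h' (kappa L (𝟙 (L.pa Y Z)) w')), heq,
        reassoc_of% (L.paHom_id_comp (A := A) (kappa L (𝟙 (L.pa Y2 Z2)) v) (L.paHom g1 g2)),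
        L.pα_natural (𝟙 A) g1 g2]
    · -- h' ⅋ 𝟙
      simp only [Hpa] at h2
      obtain ⟨hT, hA⟩ := hTidy.2.1 _ _ _ _ h2
      subst hT; subst hA
      refine paAnalysable_mk L Y Z (.pa W1 w') (L.paHom h' (𝟙 (Lpa L Y w')))
        (𝟙 (Rpa L Z w')) ?_
      rw [hform]
      simp only [eqToHom_refl, Category.comp_id, Category.id_comp, kappa, Lpa, Rpa, Hpa,
        L.paHom_id_comp, Category.assoc]
      rw [reassoc_of% (L.paHom_exch h' (kappa L (𝟙 (L.pa Y Z)) w')),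
        show L.paHom h' (𝟙 (L.pa (Lpa L Y w') (Rpa L Z w'))) =
          L.paHom h' (L.paHom (𝟙 (Lpa L Y w')) (𝟙 (Rpa L Z w'))) by rw [L.paHom_id],
        L.pα_natural h' (𝟙 _) (𝟙 _)]
  | painv A0 w' IH =>
    intro Y Z W' h hh
    rcases atomic_cases hh with ⟨A,B,E,rfl,h2,hform⟩ | ⟨A,B,E,rfl,h2,hform⟩
      | ⟨A,B,E,rfl,h2,hform⟩ | ⟨A,B,E,rfl,h2,hform⟩ | ⟨A,B,E,rfl,h2,hform⟩
      | ⟨A,B,E,rfl,h2,hform⟩ | ⟨A,W1,T1,h',rfl,h2,hat,hform⟩ | ⟨A,W1,T1,h',rfl,h2,hat,hform⟩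
      | ⟨A,W1,T1,h',rfl,h2,hat,hform⟩ | ⟨A,W1,T1,h',rfl,h2,hat,hform⟩
    · exact absurd h2 (hTidy.2.2 _ _ _ _)
    · exact absurd h2 (hTidy.2.2 _ _ _ _)
    · -- pα
      simp only [Hpa] at h2
      obtain ⟨hAB, hE⟩ := hTidy.2.1 _ _ _ _ h2
      subst hE
      cases w' with
      | nil =>
        simp only [Hpa] at hAB
        obtain ⟨hY, hZ⟩ := hTidy.2.1 _ _ _ _ hAB
        subst hY; subst hZ
        refine paAnalysable_mk L A (L.pa B E) .nil (𝟙 A) (𝟙 (L.pa B E)) ?_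
        rw [hform]
        simp [kappa, Hpa, Lpa, Rpa, L.paHom_id, L.pα_pαInv]
      | pa A2 w'' =>
        simp only [Hpa] at hAB
        obtain ⟨hA, hB⟩ := hTidy.2.1 _ _ _ _ hAB
        subst hA; subst hB
        refine paAnalysable_mk L Y Z (.pa A (.painv E w'')) (𝟙 (L.pa A (Lpa L Y w'')))
          (𝟙 (L.pa (Rpa L Z w'') E)) ?_
        rw [hform]
        simp only [eqToHom_refl, Category.comp_id, Category.id_comp, kappa, Lpa, Rpa, Hpa,
          L.paHom_id_comp, L.paHom_comp_id, Category.assoc]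
        rw [eqToHom_refl _ h2, Category.id_comp]
        rw [← reassoc_of% (L.pα_natural (𝟙 A) (kappa L (𝟙 (L.pa Y Z)) w'') (𝟙 E)), L.V4p]
        simp [L.paHom_id]
      | painv A2 w'' =>
        simp only [Hpa] at hAB
        obtain ⟨hA, hB⟩ := hTidy.2.1 _ _ _ _ hAB
        subst hA; subst hB
        refine paAnalysable_mk L Y Z (.painv (L.pa B E) w'') (𝟙 (Lpa L Y w''))
          (L.pα (Rpa L Z w'') B E) ?_
        rw [hform]
        simp only [eqToHom_refl, Category.comp_id, Category.id_comp, kappa, Lpa, Rpa, Hpa,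
          L.paHom_id_comp, L.paHom_comp_id, Category.assoc]
        rw [eqToHom_refl _ h2, Category.id_comp]
        rw [← reassoc_of% (L.pα_natural (kappa L (𝟙 (L.pa Y Z)) w'') (𝟙 B) (𝟙 E)), L.V5p,
          L.paHom_id]
      | dl A2 w'' => exact absurd hAB.symm (hTidy.2.2 _ _ _ _)
      | dr A2 w'' => exact absurd hAB.symm (hTidy.2.2 _ _ _ _)
    · -- pα⁻¹
      simp only [Hpa] at h2
      obtain ⟨hA, hBE⟩ := hTidy.2.1 _ _ _ _ h2
      subst hA; subst hBE
      refine paAnalysable_mk L Y Z (.painv E (.painv B w')) (𝟙 (Lpa L Y w'))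
        (L.pαInv (Rpa L Z w') B E) ?_
      rw [hform]
      simp only [eqToHom_refl, Category.comp_id, Category.id_comp, kappa, Lpa, Rpa, Hpa,
        L.paHom_id_comp, L.paHom_comp_id, Category.assoc]
      rw [show L.paHom (kappa L (𝟙 (L.pa Y Z)) w') (𝟙 (L.pa B E)) =
            L.paHom (kappa L (𝟙 (L.pa Y Z)) w') (L.paHom (𝟙 B) (𝟙 E)) by rw [L.paHom_id],
        ← reassoc_of% (L.pαInv_natural (kappa L (𝟙 (L.pa Y Z)) w') (𝟙 B) (𝟙 E)), L.V6p]
    · -- δl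
      simp only [Hpa] at h2
      obtain ⟨hAB, hE⟩ := hTidy.2.1 _ _ _ _ h2
      subst hE
      cases w' with
      | nil => exact absurd hAB (hTidy.2.2 _ _ _ _)
      | pa A2 w'' => exact absurd hAB (hTidy.2.2 _ _ _ _)
      | painv A2 w'' => exact absurd hAB (hTidy.2.2 _ _ _ _)
      | dl A2 w'' =>
        simp only [Hpa] at hAB
        obtain ⟨hA, hB⟩ := hTidy.1 _ _ _ _ hAB
        subst hA; subst hB
        refine paAnalysable_mk L Y Z (.dl A (.painv E w'')) (𝟙 (L.ot A (Lpa L Y w'')))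
          (𝟙 (L.pa (Rpa L Z w'') E)) ?_
        rw [hform]
        simp only [eqToHom_refl, Category.comp_id, Category.id_comp, kappa, Lpa, Rpa, Hpa,
          L.paHom_comp_id, L.otHom_id_comp, Category.assoc]
        rw [eqToHom_refl _ h2, Category.id_comp]
        rw [← reassoc_of% (L.δl_natural (𝟙 A) (kappa L (𝟙 (L.pa Y Z)) w'') (𝟙 E)), L.W1]
        simp [L.paHom_id]
      | dr A2 w'' =>
        simp only [Hpa] at hAB
        obtain ⟨hA, hB⟩ := hTidy.1 _ _ _ _ hAB
        subst hA; subst hB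
        refine paAnalysable_mk L Y Z (.dr (L.pa B E) w'') (𝟙 (Lpa L Y w''))
          (L.δl (Rpa L Z w'') B E) ?_
        rw [hform]
        simp only [eqToHom_refl, Category.comp_id, Category.id_comp, kappa, Lpa, Rpa, Hpa,
          L.paHom_comp_id, L.otHom_comp_id, Category.assoc]
        rw [eqToHom_refl _ h2, Category.id_comp]
        rw [← reassoc_of% (L.δl_natural (kappa L (𝟙 (L.pa Y Z)) w'') (𝟙 B) (𝟙 E)), L.W2,
          L.paHom_id]
    · -- δr
      simp only [Hpa] at h2
      obtain ⟨hA, hBE⟩ := hTidy.2.1 _ _ _ _ h2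
      subst hA; subst hBE
      refine paAnalysable_mk L Y Z (.dr E (.painv B w')) (𝟙 (Lpa L Y w'))
        (L.δr (Rpa L Z w') B E) ?_
      rw [hform]
      simp only [eqToHom_refl, Category.comp_id, Category.id_comp, kappa, Lpa, Rpa, Hpa,
        L.paHom_comp_id, L.otHom_comp_id, Category.assoc]
      rw [show L.paHom (kappa L (𝟙 (L.pa Y Z)) w') (𝟙 (L.ot B E)) =
            L.paHom (kappa L (𝟙 (L.pa Y Z)) w') (L.otHom (𝟙 B) (𝟙 E)) by rw [L.otHom_id],
        ← reassoc_of% (L.δr_natural (kappa L (𝟙 (L.pa Y Z)) w') (𝟙 B) (𝟙 E)), L.W3]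
    · exact absurd h2 (hTidy.2.2 _ _ _ _)
    · exact absurd h2 (hTidy.2.2 _ _ _ _)
    · -- 𝟙 ⅋ h'
      simp only [Hpa] at h2
      obtain ⟨hA, hT⟩ := hTidy.2.1 _ _ _ _ h2
      subst hA; subst hT
      refine paAnalysable_mk L Y Z (.painv W1 w') (𝟙 (Lpa L Y w'))
        (L.paHom (𝟙 (Rpa L Z w')) h') ?_
      rw [hform]
      simp only [eqToHom_refl, Category.comp_id, Category.id_comp, kappa, Lpa, Rpa, Hpa,
        L.paHom_id_comp, L.paHom_comp_id, Category.assoc]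
      rw [← reassoc_of% (L.paHom_exch (kappa L (𝟙 (L.pa Y Z)) w') h'),
        show L.paHom (𝟙 (L.pa (Lpa L Y w') (Rpa L Z w'))) h' =
          L.paHom (L.paHom (𝟙 (Lpa L Y w')) (𝟙 (Rpa L Z w'))) h' by rw [L.paHom_id],
        L.pαInv_natural (𝟙 _) (𝟙 _) h']
    · -- h' ⅋ 𝟙
      simp only [Hpa] at h2
      obtain ⟨hT, hA⟩ := hTidy.2.1 _ _ _ _ h2
      subst hT; subst hA
      obtain ⟨X2, Y2, Z2, i2, ⟨hE2, rfl⟩, v, Q1, Q2, g1, g2, hP2, hT2, heq⟩ := IH Y Z h' hat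
      subst hE2
      obtain ⟨hQ1, hQ2⟩ := hTidy.2.1 _ _ _ _ hT2
      subst hQ1; subst hQ2; subst hP2
      simp only [eqToHom_refl, Category.comp_id, Category.id_comp] at heq
      refine paAnalysable_mk L Y2 Z2 (.painv A v) g1 (L.paHom g2 (𝟙 A)) ?_
      rw [hform]
      simp only [eqToHom_refl, Category.comp_id, Category.id_comp, kappa, Lpa, Rpa, Hpa,
        Category.assoc]
      rw [← reassoc_of% (L.paHom_comp_id (A := A) h' (kappa L (𝟙 (L.pa Y Z)) w')), heq,
        reassoc_of% (L.paHom_comp_id (A := A) (kappa L (𝟙 (L.pa Y2 Z2)) v) (L.paHom g1 g2)),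
        L.pαInv_natural g1 g2 (𝟙 A)]
  | dl A0 w' IH =>
    intro Y Z W' h hh
    rcases atomic_cases hh with ⟨A,B,E,rfl,h2,hform⟩ | ⟨A,B,E,rfl,h2,hform⟩
      | ⟨A,B,E,rfl,h2,hform⟩ | ⟨A,B,E,rfl,h2,hform⟩ | ⟨A,B,E,rfl,h2,hform⟩
      | ⟨A,B,E,rfl,h2,hform⟩ | ⟨A,W1,T1,h',rfl,h2,hat,hform⟩ | ⟨A,W1,T1,h',rfl,h2,hat,hform⟩
      | ⟨A,W1,T1,h',rfl,h2,hat,hform⟩ | ⟨A,W1,T1,h',rfl,h2,hat,hform⟩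
    · -- α
      simp only [Hpa] at h2
      obtain ⟨hA, hE⟩ := hTidy.1 _ _ _ _ h2
      subst hA; subst hE
      refine paAnalysable_mk L Y Z (.dl A (.dl B w')) (L.α A B (Lpa L Y w')) (𝟙 (Rpa L Z w')) ?_
      rw [hform]
      simp only [eqToHom_refl, Category.comp_id, Category.id_comp, kappa, Lpa, Rpa, Hpa,
        L.otHom_id_comp, Category.assoc]
      rw [show L.otHom (𝟙 (L.ot A B)) (kappa L (𝟙 (L.pa Y Z)) w') =
            L.otHom (L.otHom (𝟙 A) (𝟙 B)) (kappa L (𝟙 (L.pa Y Z)) w') by rw [L.otHom_id],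
          ← reassoc_of% (L.α_natural (𝟙 A) (𝟙 B) (kappa L (𝟙 (L.pa Y Z)) w')), L.P2]
    · -- α⁻¹
      simp only [Hpa] at h2
      obtain ⟨hA, hBE⟩ := hTidy.1 _ _ _ _ h2
      subst hA
      cases w' with
      | nil => exact absurd hBE (hTidy.2.2 _ _ _ _)
      | pa A2 w'' => exact absurd hBE (hTidy.2.2 _ _ _ _)
      | painv A2 w'' => exact absurd hBE (hTidy.2.2 _ _ _ _)
      | dl A2 w'' =>
        simp only [Hpa] at hBE
        obtain ⟨hB, hE⟩ := hTidy.1 _ _ _ _ hBE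
        subst hB; subst hE
        refine paAnalysable_mk L Y Z (.dl (L.ot A B) w'') (L.αInv A B (Lpa L Y w''))
          (𝟙 (Rpa L Z w'')) ?_
        rw [hform]
        simp only [eqToHom_refl, Category.comp_id, Category.id_comp, kappa, Lpa, Rpa, Hpa,
          L.otHom_id_comp, Category.assoc]
        rw [eqToHom_refl _ h2, Category.id_comp]
        rw [← reassoc_of% (L.αInv_natural (𝟙 A) (𝟙 B) (kappa L (𝟙 (L.pa Y Z)) w'')), L.W4,
          L.otHom_id]
      | dr A2 w'' =>
        simp only [Hpa] at hBE
        obtain ⟨hB, hE⟩ := hTidy.1 _ _ _ _ hBE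
        subst hB; subst hE
        refine paAnalysable_mk L Y Z (.dr E (.dl A w'')) (𝟙 (L.ot A (Lpa L Y w'')))
          (𝟙 (L.ot (Rpa L Z w'') E)) ?_
        rw [hform]
        simp only [eqToHom_refl, Category.comp_id, Category.id_comp, kappa, Lpa, Rpa, Hpa,
          L.otHom_id_comp, L.otHom_comp_id, Category.assoc]
        rw [eqToHom_refl _ h2, Category.id_comp]
        rw [← reassoc_of% (L.αInv_natural (𝟙 A) (kappa L (𝟙 (L.pa Y Z)) w'') (𝟙 E)), L.W5]
        simp [L.paHom_id]
    · exact absurd h2.symm (hTidy.2.2 _ _ _ _)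
    · exact absurd h2.symm (hTidy.2.2 _ _ _ _)
    · exact absurd h2.symm (hTidy.2.2 _ _ _ _)
    · exact absurd h2.symm (hTidy.2.2 _ _ _ _)
    · -- 𝟙 ⊗ h'
      simp only [Hpa] at h2
      obtain ⟨hA, hT⟩ := hTidy.1 _ _ _ _ h2
      subst hA; subst hT
      obtain ⟨X2, Y2, Z2, i2, ⟨hE2, rfl⟩, v, Q1, Q2, g1, g2, hP2, hT2, heq⟩ := IH Y Z h' hat
      subst hE2
      obtain ⟨hQ1, hQ2⟩ := hTidy.2.1 _ _ _ _ hT2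
      subst hQ1; subst hQ2; subst hP2
      simp only [eqToHom_refl, Category.comp_id, Category.id_comp] at heq
      refine paAnalysable_mk L Y2 Z2 (.dl A v) (L.otHom (𝟙 A) g1) g2 ?_
      rw [hform]
      simp only [eqToHom_refl, Category.comp_id, Category.id_comp, kappa, Lpa, Rpa, Hpa,
        Category.assoc]
      rw [← reassoc_of% (L.otHom_id_comp (A := A) h' (kappa L (𝟙 (L.pa Y Z)) w')), heq,
        reassoc_of% (L.otHom_id_comp (A := A) (kappa L (𝟙 (L.pa Y2 Z2)) v) (L.paHom g1 g2)),
        L.δl_natural (𝟙 A) g1 g2]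
    · -- h' ⊗ 𝟙
      simp only [Hpa] at h2
      obtain ⟨hT, hA⟩ := hTidy.1 _ _ _ _ h2
      subst hT; subst hA
      refine paAnalysable_mk L Y Z (.dl W1 w') (L.otHom h' (𝟙 (Lpa L Y w')))
        (𝟙 (Rpa L Z w')) ?_
      rw [hform]
      simp only [eqToHom_refl, Category.comp_id, Category.id_comp, kappa, Lpa, Rpa, Hpa,
        L.otHom_id_comp, Category.assoc]
      rw [reassoc_of% (L.otHom_exch h' (kappa L (𝟙 (L.pa Y Z)) w')),
        show L.otHom h' (𝟙 (L.pa (Lpa L Y w') (Rpa L Z w'))) =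
          L.otHom h' (L.paHom (𝟙 (Lpa L Y w')) (𝟙 (Rpa L Z w'))) by rw [L.paHom_id],
        L.δl_natural h' (𝟙 _) (𝟙 _)]
    · exact absurd h2.symm (hTidy.2.2 _ _ _ _)
    · exact absurd h2.symm (hTidy.2.2 _ _ _ _)
  | dr A0 w' IH =>
    intro Y Z W' h hh
    rcases atomic_cases hh with ⟨A,B,E,rfl,h2,hform⟩ | ⟨A,B,E,rfl,h2,hform⟩
      | ⟨A,B,E,rfl,h2,hform⟩ | ⟨A,B,E,rfl,h2,hform⟩ | ⟨A,B,E,rfl,h2,hform⟩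
      | ⟨A,B,E,rfl,h2,hform⟩ | ⟨A,W1,T1,h',rfl,h2,hat,hform⟩ | ⟨A,W1,T1,h',rfl,h2,hat,hform⟩
      | ⟨A,W1,T1,h',rfl,h2,hat,hform⟩ | ⟨A,W1,T1,h',rfl,h2,hat,hform⟩
    · -- α
      simp only [Hpa] at h2
      obtain ⟨hAB, hE⟩ := hTidy.1 _ _ _ _ h2
      subst hE
      cases w' with
      | nil => exact absurd hAB (hTidy.2.2 _ _ _ _)
      | pa A2 w'' => exact absurd hAB (hTidy.2.2 _ _ _ _)
      | painv A2 w'' => exact absurd hAB (hTidy.2.2 _ _ _ _)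
      | dl A2 w'' =>
        simp only [Hpa] at hAB
        obtain ⟨hA, hB⟩ := hTidy.1 _ _ _ _ hAB
        subst hA; subst hB
        refine paAnalysable_mk L Y Z (.dl A (.dr E w'')) (𝟙 (L.ot A (Lpa L Y w'')))
          (𝟙 (L.ot (Rpa L Z w'') E)) ?_
        rw [hform]
        simp only [eqToHom_refl, Category.comp_id, Category.id_comp, kappa, Lpa, Rpa, Hpa,
          L.otHom_id_comp, L.otHom_comp_id, Category.assoc]
        rw [eqToHom_refl _ h2, Category.id_comp]
        rw [← reassoc_of% (L.α_natural (𝟙 A) (kappa L (𝟙 (L.pa Y Z)) w'') (𝟙 E)), ← L.P3]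
        simp [L.paHom_id]
      | dr A2 w'' =>
        simp only [Hpa] at hAB
        obtain ⟨hA, hB⟩ := hTidy.1 _ _ _ _ hAB
        subst hA; subst hB
        refine paAnalysable_mk L Y Z (.dr (L.ot B E) w'') (𝟙 (Lpa L Y w''))
          (L.α (Rpa L Z w'') B E) ?_
        rw [hform]
        simp only [eqToHom_refl, Category.comp_id, Category.id_comp, kappa, Lpa, Rpa, Hpa,
          L.otHom_id_comp, L.otHom_comp_id, Category.assoc]
        rw [eqToHom_refl _ h2, Category.id_comp]
        rw [← reassoc_of% (L.α_natural (kappa L (𝟙 (L.pa Y Z)) w'') (𝟙 B) (𝟙 E)), ← L.P5,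
          L.otHom_id]
    · -- α⁻¹
      simp only [Hpa] at h2
      obtain ⟨hA, hBE⟩ := hTidy.1 _ _ _ _ h2
      subst hA; subst hBE
      refine paAnalysable_mk L Y Z (.dr E (.dr B w')) (𝟙 (Lpa L Y w'))
        (L.αInv (Rpa L Z w') B E) ?_
      rw [hform]
      simp only [eqToHom_refl, Category.comp_id, Category.id_comp, kappa, Lpa, Rpa, Hpa,
        L.otHom_id_comp, L.otHom_comp_id, Category.assoc]
      rw [show L.otHom (kappa L (𝟙 (L.pa Y Z)) w') (𝟙 (L.ot B E)) =
            L.otHom (kappa L (𝟙 (L.pa Y Z)) w') (L.otHom (𝟙 B) (𝟙 E)) by rw [L.otHom_id],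
        ← reassoc_of% (L.αInv_natural (kappa L (𝟙 (L.pa Y Z)) w') (𝟙 B) (𝟙 E)), L.W6]
    · exact absurd h2.symm (hTidy.2.2 _ _ _ _)
    · exact absurd h2.symm (hTidy.2.2 _ _ _ _)
    · exact absurd h2.symm (hTidy.2.2 _ _ _ _)
    · exact absurd h2.symm (hTidy.2.2 _ _ _ _)
    · -- 𝟙 ⊗ h'
      simp only [Hpa] at h2
      obtain ⟨hA, hT⟩ := hTidy.1 _ _ _ _ h2
      subst hA; subst hT
      refine paAnalysable_mk L Y Z (.dr W1 w') (𝟙 (Lpa L Y w'))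
        (L.otHom (𝟙 (Rpa L Z w')) h') ?_
      rw [hform]
      simp only [eqToHom_refl, Category.comp_id, Category.id_comp, kappa, Lpa, Rpa, Hpa,
        L.otHom_id_comp, L.otHom_comp_id, Category.assoc]
      rw [← reassoc_of% (L.otHom_exch (kappa L (𝟙 (L.pa Y Z)) w') h'),
        show L.otHom (𝟙 (L.pa (Lpa L Y w') (Rpa L Z w'))) h' =
          L.otHom (L.paHom (𝟙 (Lpa L Y w')) (𝟙 (Rpa L Z w'))) h' by rw [L.paHom_id],
        L.δr_natural (𝟙 _) (𝟙 _) h']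
    · -- h' ⊗ 𝟙
      simp only [Hpa] at h2
      obtain ⟨hT, hA⟩ := hTidy.1 _ _ _ _ h2
      subst hT; subst hA
      obtain ⟨X2, Y2, Z2, i2, ⟨hE2, rfl⟩, v, Q1, Q2, g1, g2, hP2, hT2, heq⟩ := IH Y Z h' hat
      subst hE2
      obtain ⟨hQ1, hQ2⟩ := hTidy.2.1 _ _ _ _ hT2
      subst hQ1; subst hQ2; subst hP2
      simp only [eqToHom_refl, Category.comp_id, Category.id_comp] at heq
      refine paAnalysable_mk L Y2 Z2 (.dr A v) g1 (L.otHom g2 (𝟙 A)) ?_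
      rw [hform]
      simp only [eqToHom_refl, Category.comp_id, Category.id_comp, kappa, Lpa, Rpa, Hpa,
        Category.assoc]
      rw [← reassoc_of% (L.otHom_comp_id (A := A) h' (kappa L (𝟙 (L.pa Y Z)) w')), heq,
        reassoc_of% (L.otHom_comp_id (A := A) (kappa L (𝟙 (L.pa Y2 Z2)) v) (L.paHom g1 g2)),
        L.δr_natural g1 g2 (𝟙 A)]
    · exact absurd h2.symm (hTidy.2.2 _ _ _ _)
    · exact absurd h2.symm (hTidy.2.2 _ _ _ _)

/-- Precomposing an `Id^⊗`-analysable morphism with an elementary morphism. -/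
lemma elem_comp_otAnalysable (L : LD C) (hTidy : L.Tidy) {W T : C} {f : W ⟶ T}
    (hf : Elementary L f) :
    ∀ {U : C} (g : T ⟶ U), OtAnalysable L (IdOtSet L) g →
      OtAnalysable L (IdOtSet L) (f ≫ g) := by
  induction hf with
  | id X => intro U g hg; simpa using hg
  | comp hf1 hf2 ih1 ih2 =>
    intro U g hg
    rw [Category.assoc]
    exact ih1 _ (ih2 _ hg)
  | of hat =>
    intro U g hg
    obtain ⟨X2, Y2, Z2, i2, ⟨hE2, rfl⟩, v, Q1, Q2, g1, g2, hP2, hT2, heq⟩ := hg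
    subst hE2; subst hP2
    obtain ⟨X3, Y3, Z3, i3, ⟨hE3, rfl⟩, v3, Q1', Q2', g1', g2', hP3, hT3, heq3⟩ :=
      atomic_comp_tau L hTidy v Y2 Z2 _ hat
    subst hE3
    obtain ⟨hQ1, hQ2⟩ := hTidy.1 _ _ _ _ hT3
    subst hQ1; subst hQ2
    refine otAnalysable_mk' L Y3 Z3 v3 (g1' ≫ g1) (g2' ≫ g2) hP3 hT2 ?_
    simp only [eqToHom_refl, Category.comp_id, Category.id_comp] at heq heq3 ⊢
    rw [heq, ← Category.assoc, heq3]
    simp [L.otHom_comp]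

/-- Precomposing an `Id^⅋`-analysable morphism with an elementary morphism. -/
lemma elem_comp_paAnalysable (L : LD C) (hTidy : L.Tidy) {W T : C} {f : W ⟶ T}
    (hf : Elementary L f) :
    ∀ {U : C} (g : T ⟶ U), PaAnalysable L (IdPaSet L) g →
      PaAnalysable L (IdPaSet L) (f ≫ g) := by
  induction hf with
  | id X => intro U g hg; simpa using hg
  | comp hf1 hf2 ih1 ih2 =>
    intro U g hg
    rw [Category.assoc]
    exact ih1 _ (ih2 _ hg)
  | of hat =>
    intro U g hg
    obtain ⟨X2, Y2, Z2, i2, ⟨hE2, rfl⟩, v, Q1, Q2, g1, g2, hP2, hT2, heq⟩ := hg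
    subst hE2; subst hP2
    obtain ⟨X3, Y3, Z3, i3, ⟨hE3, rfl⟩, v3, Q1', Q2', g1', g2', hP3, hT3, heq3⟩ :=
      atomic_comp_kappa L hTidy v Y2 Z2 _ hat
    subst hE3
    obtain ⟨hQ1, hQ2⟩ := hTidy.2.1 _ _ _ _ hT3
    subst hQ1; subst hQ2
    refine paAnalysable_mk' L Y3 Z3 v3 (g1' ≫ g1) (g2' ≫ g2) hP3 hT2 ?_
    simp only [eqToHom_refl, Category.comp_id, Category.id_comp] at heq heq3 ⊢
    rw [heq, ← Category.assoc, heq3]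
    simp [L.paHom_comp]

end Infrastructure

/-- **Normal form for elementary morphisms in a tidy LD category**:
(i) if the target is not a tensor product, the morphism is an identity;
(ii) if the target is an ⊗-product, it is `Id^⊗`-analysable;
(iii) if the target is a ⅋-product, it is `Id^⅋`-analysable. -/
theorem elementary_normal_form {C : Type u} [Category.{v} C]
    (L : LD C) (hTidy : L.Tidy)
    {W T : C} (f : W ⟶ T) (hf : Elementary L f) :
    ((¬ ∃ A B : C, T = L.ot A B) → (¬ ∃ A B : C, T = L.pa A B) →
        ∃ e : W = T, f = eqToHom e) ∧
    ((∃ A B : C, T = L.ot A B) → OtAnalysable L (IdOtSet L) f) ∧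
    ((∃ A B : C, T = L.pa A B) → PaAnalysable L (IdPaSet L) f) := by
  induction hf with
  | id X =>
    refine ⟨fun _ _ => ⟨rfl, by simp⟩, ?_, ?_⟩
    · rintro ⟨A, B, rfl⟩
      exact otAnalysable_mk L A B .nil (𝟙 A) (𝟙 B)
        (by simp [tau, Hot, Lot, Rot, L.otHom_id])
    · rintro ⟨A, B, rfl⟩
      exact paAnalysable_mk L A B .nil (𝟙 A) (𝟙 B)
        (by simp [kappa, Hpa, Lpa, Rpa, L.paHom_id])
  | of hat =>
    refine ⟨?_, ?_, ?_⟩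
    · intro hnot hnpa
      exfalso
      rcases atomic_cases hat with ⟨A,B,E,_,h2,_⟩ | ⟨A,B,E,_,h2,_⟩
        | ⟨A,B,E,_,h2,_⟩ | ⟨A,B,E,_,h2,_⟩ | ⟨A,B,E,_,h2,_⟩
        | ⟨A,B,E,_,h2,_⟩ | ⟨A,W1,T1,h',_,h2,_,_⟩ | ⟨A,W1,T1,h',_,h2,_,_⟩
        | ⟨A,W1,T1,h',_,h2,_,_⟩ | ⟨A,W1,T1,h',_,h2,_,_⟩
      · exact hnot ⟨_, _, h2.symm⟩
      · exact hnot ⟨_, _, h2.symm⟩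
      · exact hnpa ⟨_, _, h2.symm⟩
      · exact hnpa ⟨_, _, h2.symm⟩
      · exact hnpa ⟨_, _, h2.symm⟩
      · exact hnpa ⟨_, _, h2.symm⟩
      · exact hnot ⟨_, _, h2.symm⟩
      · exact hnot ⟨_, _, h2.symm⟩
      · exact hnpa ⟨_, _, h2.symm⟩
      · exact hnpa ⟨_, _, h2.symm⟩
    · rintro ⟨A, B, rfl⟩
      have h := atomic_comp_tau L hTidy .nil A B _ hat
      simpa [tau, Hot, Lot, Rot] using h
    · rintro ⟨A, B, rfl⟩
      have h := atomic_comp_kappa L hTidy .nil A B _ hat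
      simpa [kappa, Hpa, Lpa, Rpa] using h
  | comp hf1 hf2 ih1 ih2 =>
    refine ⟨?_, ?_, ?_⟩
    · intro hnot hnpa
      obtain ⟨e2, hg⟩ := ih2.1 hnot hnpa
      obtain ⟨e1, hf'⟩ := ih1.1 (fun ⟨A, B, hh⟩ => hnot ⟨A, B, e2.symm.trans hh⟩)
        (fun ⟨A, B, hh⟩ => hnpa ⟨A, B, e2.symm.trans hh⟩)
      exact ⟨e1.trans e2, by rw [hf', hg, eqToHom_trans]⟩
    · rintro ⟨A, B, rfl⟩
      exact elem_comp_otAnalysable L hTidy hf1 _ (ih2.2.1 ⟨A, B, rfl⟩)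
    · rintro ⟨A, B, rfl⟩
      exact elem_comp_paAnalysable L hTidy hf1 _ (ih2.2.2 ⟨A, B, rfl⟩)

end LDCoherence
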